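/- arXiv:1803.05948 — 3 statements merged into one kernel-verified Lean document; each statement's English description precedes it below -/
import Mathlib

section
/- (Continuous master theorem, case 3.) Let N ∈ ℕ and for each n ≥ N let (w_{n,j})_{0≤j<n} be nonnegative reals. Let F : ℕ → ℝ satisfy F_n = t_n + Σ_{j=0}^{n−1} w_{n,j}·F_j for all n ≥ N, where t_n ~ K·n^a·(ln n)^β as n → ∞ for constants K ≠ 0, a ≥ 0, β > −1. Assume there is a measurable shape function w : [0,1] → ℝ_{≥0} with ∫_0^1 w(z) dz ≥ 1 and Σ_{j=0}^{n−1} |w_{n,j} − ∫_{j/n}^{(j+1)/n} w(z) dz| = O(n^{−d}) for some constant d > 0. If 1 − ∫_0^1 z^a·w(z) dz < 0, then F_n = O(n^c) for the unique real c with ∫_0^1 z^c·w(z) dz = 1. -/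
open MeasureTheory Filter Real Finset

/-- Real subadditivity of rpow for exponents in [0,1]. -/
lemma cmt_rpow_add_le {a b p : ℝ} (ha : 0 ≤ a) (hb : 0 ≤ b) (hp : 0 ≤ p) (hp1 : p ≤ 1) :
    (a + b) ^ p ≤ a ^ p + b ^ p := by
  have h := NNReal.rpow_add_le_add_rpow a.toNNReal b.toNNReal hp hp1
  have := NNReal.coe_le_coe.2 h
  push_cast [NNReal.coe_rpow, Real.coe_toNNReal a ha, Real.coe_toNNReal b hb] at this
  simpa using this

/-- Increment bound for rpow on [0,1]. -/
lemma cmt_rpow_incr {e h y z : ℝ} (he : 0 < e) (hy : 0 ≤ y) (hyz : y ≤ z) (hz1 : z ≤ 1)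
    (hh : 0 ≤ h) (hzy : z - y ≤ h) :
    z ^ e ≤ y ^ e + max e 1 * h ^ min e 1 := by
  rcases le_total e 1 with he1 | he1
  · have h1 : z ^ e ≤ y ^ e + (z - y) ^ e := by
      have := cmt_rpow_add_le hy (sub_nonneg.2 hyz) he.le he1
      simpa [add_sub_cancel] using this
    have h2 : (z - y) ^ e ≤ h ^ e :=
      Real.rpow_le_rpow (sub_nonneg.2 hyz) hzy he.le
    have h3 : h ^ e ≤ max e 1 * h ^ min e 1 := by
      rw [min_eq_left he1]
      nlinarith [Real.rpow_nonneg hh e, le_max_right e 1]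
    linarith
  · have hint : ∫ t in y..z, t ^ (e - 1) = (z ^ e - y ^ e) / e := by
      rw [integral_rpow (Or.inl (by linarith))]
      norm_num
    have hmono : ∫ t in y..z, t ^ (e - 1) ≤ ∫ t in y..z, (1 : ℝ) := by
      apply intervalIntegral.integral_mono_on hyz
      · exact intervalIntegral.intervalIntegrable_rpow (Or.inl (by linarith))
      · exact intervalIntegrable_const
      · intro t ht
        exact Real.rpow_le_one (le_trans hy ht.1) (le_trans ht.2 hz1) (by linarith)
    rw [hint] at hmono
    simp only [intervalIntegral.integral_const, smul_eq_mul, mul_one] at hmono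
    have hez : (z ^ e - y ^ e) ≤ e * (z - y) := by
      rw [div_le_iff₀ he] at hmono
      linarith [mul_comm e (z - y)]
    have : e * (z - y) ≤ max e 1 * h ^ min e 1 := by
      rw [min_eq_right he1, Real.rpow_one]
      have : e * (z - y) ≤ e * h := mul_le_mul_of_nonneg_left hzy (by linarith)
      calc e * (z - y) ≤ e * h := this
        _ ≤ max e 1 * h := mul_le_mul_of_nonneg_right (le_max_left e 1) hh
    linarith

lemma cmt_sub_int {f : ℝ → ℝ} (hf : IntervalIntegrable f volume 0 1)
    {x y : ℝ} (hx : 0 ≤ x) (hxy : x ≤ y) (hy : y ≤ 1) :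
    IntervalIntegrable f volume x y := by
  apply hf.mono_set
  rw [Set.uIcc_of_le hxy, Set.uIcc_of_le (by norm_num : (0:ℝ) ≤ 1)]
  exact Set.Icc_subset_Icc hx hy

lemma cmt_adj {f : ℝ → ℝ} (hf : IntervalIntegrable f volume 0 1) {n : ℕ} (hn : 1 ≤ n) :
    ∑ j ∈ range n, (∫ z in (j:ℝ)/n..((j:ℝ)+1)/n, f z) = ∫ z in (0:ℝ)..1, f z := by
  have hn0 : (0:ℝ) < n := by exact_mod_cast hn
  have key := intervalIntegral.sum_integral_adjacent_intervals
    (a := fun k : ℕ => (k:ℝ)/n) (n := n) (f := f) (μ := volume) ?_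
  · have h0 : ((0:ℕ):ℝ)/n = 0 := by simp
    have h1 : ((n:ℕ):ℝ)/n = 1 := by field_simp
    rw [h0, h1] at key
    rw [← key]
    apply Finset.sum_congr rfl
    intro j hj
    push_cast
    ring_nf
  · intro k hk
    apply cmt_sub_int hf
    · positivity
    · apply div_le_div_of_nonneg_right ?_ hn0.le
      push_cast; linarith
    · rw [div_le_one hn0]
      push_cast
      exact_mod_cast Nat.succ_le_of_lt hk

section
variable {w : ℝ → ℝ} (hwmeas : Measurable w)
  (hwnn : ∀ z ∈ Set.Icc (0:ℝ) 1, 0 ≤ w z)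
  (hwInt : IntervalIntegrable w volume 0 1)

include hwmeas hwInt in
lemma cmt_int_pow {e : ℝ} (he : 0 ≤ e) :
    IntervalIntegrable (fun z => z ^ e * w z) volume 0 1 := by
  apply hwInt.mono_fun
  · exact ((measurable_id.pow_const e).mul hwmeas).aestronglyMeasurable
  · rw [Set.uIoc_of_le (by norm_num : (0:ℝ) ≤ 1)]
    filter_upwards [ae_restrict_mem measurableSet_Ioc] with z hz
    simp only [norm_mul, Real.norm_eq_abs]
    have h1 : |z ^ e| ≤ 1 := by
      rw [abs_of_nonneg (Real.rpow_nonneg hz.1.le e)]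
      exact Real.rpow_le_one hz.1.le hz.2 he
    nlinarith [abs_nonneg (w z), abs_nonneg (z ^ e)]
end

section
variable {w : ℝ → ℝ} (hwmeas : Measurable w)
  (hwnn : ∀ z ∈ Set.Icc (0:ℝ) 1, 0 ≤ w z)
  (hwInt : IntervalIntegrable w volume 0 1)

include hwmeas hwnn hwInt in
lemma cmt_riemann_upper {n : ℕ} (hn : 1 ≤ n) {e : ℝ} (he : 0 ≤ e) :
    ∑ j ∈ range n, ((j:ℝ)/n) ^ e * (∫ z in (j:ℝ)/n..((j:ℝ)+1)/n, w z)
      ≤ ∫ z in (0:ℝ)..1, z ^ e * w z := by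
  have hn0 : (0:ℝ) < n := by exact_mod_cast hn
  rw [← cmt_adj (cmt_int_pow hwmeas hwInt he) hn]
  apply Finset.sum_le_sum
  intro j hj
  have hj1 : ((j:ℝ)+1)/n ≤ 1 := by
    rw [div_le_one hn0]; exact_mod_cast Nat.succ_le_of_lt (Finset.mem_range.1 hj)
  have hj0 : (0:ℝ) ≤ (j:ℝ)/n := by positivity
  have hjj : (j:ℝ)/n ≤ ((j:ℝ)+1)/n := by
    apply div_le_div_of_nonneg_right (by linarith) hn0.le
  rw [← intervalIntegral.integral_const_mul]
  apply intervalIntegral.integral_mono_on hjj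
  · exact (cmt_sub_int hwInt hj0 hjj hj1).const_mul _
  · exact cmt_sub_int (cmt_int_pow hwmeas hwInt he) hj0 hjj hj1
  · intro z hz
    have hz0 : 0 ≤ z := le_trans hj0 hz.1
    have hz1 : z ≤ 1 := le_trans hz.2 hj1
    have hw0 : 0 ≤ w z := hwnn z ⟨hz0, hz1⟩
    exact mul_le_mul_of_nonneg_right (Real.rpow_le_rpow hj0 hz.1 he) hw0
end

section
variable {w : ℝ → ℝ} (hwmeas : Measurable w)
  (hwnn : ∀ z ∈ Set.Icc (0:ℝ) 1, 0 ≤ w z)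
  (hwInt : IntervalIntegrable w volume 0 1)

include hwmeas hwnn hwInt in
lemma cmt_riemann_lower {n : ℕ} (hn : 1 ≤ n) {e : ℝ} (he : 0 < e) :
    (∫ z in (0:ℝ)..1, z ^ e * w z)
      ≤ (∑ j ∈ range n, ((j:ℝ)/n) ^ e * (∫ z in (j:ℝ)/n..((j:ℝ)+1)/n, w z))
        + (max e 1 * (n:ℝ) ^ (-(min e 1))) * ∫ z in (0:ℝ)..1, w z := by
  have hn0 : (0:ℝ) < n := by exact_mod_cast hn
  set δ : ℝ := max e 1 * (n:ℝ) ^ (-(min e 1)) with hδ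
  have hδ0 : 0 ≤ δ := by positivity
  have key : (∫ z in (0:ℝ)..1, z ^ e * w z)
      ≤ ∑ j ∈ range n, (((j:ℝ)/n) ^ e + δ) * (∫ z in (j:ℝ)/n..((j:ℝ)+1)/n, w z) := by
    rw [← cmt_adj (cmt_int_pow hwmeas hwInt he.le) hn]
    apply Finset.sum_le_sum
    intro j hj
    have hj1 : ((j:ℝ)+1)/n ≤ 1 := by
      rw [div_le_one hn0]; exact_mod_cast Nat.succ_le_of_lt (Finset.mem_range.1 hj)
    have hj0 : (0:ℝ) ≤ (j:ℝ)/n := by positivity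
    have hjj : (j:ℝ)/n ≤ ((j:ℝ)+1)/n :=
      div_le_div_of_nonneg_right (by linarith) hn0.le
    rw [← intervalIntegral.integral_const_mul]
    apply intervalIntegral.integral_mono_on hjj
    · exact cmt_sub_int (cmt_int_pow hwmeas hwInt he.le) hj0 hjj hj1
    · exact (cmt_sub_int hwInt hj0 hjj hj1).const_mul _
    · intro z hz
      have hz0 : 0 ≤ z := le_trans hj0 hz.1
      have hz1 : z ≤ 1 := le_trans hz.2 hj1
      have hw0 : 0 ≤ w z := hwnn z ⟨hz0, hz1⟩
      have hzpow : z ^ e ≤ ((j:ℝ)/n) ^ e + δ := by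
        have hinc := cmt_rpow_incr (h := 1/(n:ℝ)) he hj0 hz.1 hz1 (by positivity)
          (by rw [sub_le_iff_le_add]
              calc z ≤ ((j:ℝ)+1)/n := hz.2
                _ = 1/(n:ℝ) + (j:ℝ)/n := by ring)
        have hpow : (1/(n:ℝ)) ^ min e 1 = (n:ℝ) ^ (-(min e 1)) := by
          rw [one_div, ← Real.rpow_neg_one, ← Real.rpow_mul hn0.le]
          ring_nf
        rw [hpow] at hinc
        exact hinc
      exact mul_le_mul_of_nonneg_right hzpow hw0
  calc (∫ z in (0:ℝ)..1, z ^ e * w z)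
      ≤ ∑ j ∈ range n, (((j:ℝ)/n) ^ e + δ) * (∫ z in (j:ℝ)/n..((j:ℝ)+1)/n, w z) := key
    _ = (∑ j ∈ range n, ((j:ℝ)/n) ^ e * (∫ z in (j:ℝ)/n..((j:ℝ)+1)/n, w z))
        + δ * ∑ j ∈ range n, (∫ z in (j:ℝ)/n..((j:ℝ)+1)/n, w z) := by
      rw [Finset.mul_sum, ← Finset.sum_add_distrib]
      apply Finset.sum_congr rfl; intro j _; ring
    _ = _ := by rw [cmt_adj hwInt hn]
end

section
variable {w : ℝ → ℝ} (hwmeas : Measurable w)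
  (hwnn : ∀ z ∈ Set.Icc (0:ℝ) 1, 0 ≤ w z)
  (hwInt : IntervalIntegrable w volume 0 1)

lemma cmt_ae_ne (c : ℝ) (μ : Measure ℝ) [NullSingletonClass μ] : ∀ᵐ z ∂μ, z ≠ c := by
  rw [ae_iff]
  have : {z : ℝ | ¬ z ≠ c} = {c} := by ext z; simp
  rw [this]
  exact measure_singleton c

include hwnn in
lemma cmt_int_mono {e1 e2 : ℝ} (h12 : e1 ≤ e2)
    (hInt1 : IntervalIntegrable (fun z => z ^ e1 * w z) volume 0 1)
    (hInt2 : IntervalIntegrable (fun z => z ^ e2 * w z) volume 0 1) :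
    (∫ z in (0:ℝ)..1, z ^ e2 * w z) ≤ ∫ z in (0:ℝ)..1, z ^ e1 * w z := by
  apply intervalIntegral.integral_mono_ae_restrict (by norm_num) hInt2 hInt1
  filter_upwards [ae_restrict_mem measurableSet_Icc,
    ae_restrict_of_ae (cmt_ae_ne 0 volume)] with z hz hz0
  have hzpos : 0 < z := lt_of_le_of_ne hz.1 (Ne.symm hz0)
  exact mul_le_mul_of_nonneg_right
    (Real.rpow_le_rpow_of_exponent_ge hzpos hz.2 h12) (hwnn z hz)

include hwmeas hwnn hwInt in
lemma cmt_int_strict {e1 e2 : ℝ} (he1 : 0 ≤ e1) (h12 : e1 < e2)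
    (hwint : 1 ≤ ∫ z in (0:ℝ)..1, w z) :
    (∫ z in (0:ℝ)..1, z ^ e2 * w z) < ∫ z in (0:ℝ)..1, z ^ e1 * w z := by
  have hInt1 := cmt_int_pow hwmeas hwInt he1
  have hInt2 := cmt_int_pow hwmeas hwInt (le_trans he1 h12.le)
  have hle := cmt_int_mono hwnn h12.le hInt1 hInt2
  rcases hle.lt_or_eq with h | h
  · exact h
  · exfalso
    have hDint : IntervalIntegrable (fun z => z ^ e1 * w z - z ^ e2 * w z) volume 0 1 :=
      hInt1.sub hInt2
    have hDzero : (∫ z in (0:ℝ)..1, (z ^ e1 * w z - z ^ e2 * w z)) = 0 := by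
      rw [intervalIntegral.integral_sub hInt1 hInt2, h, sub_self]
    have hDnn : 0 ≤ᵐ[volume.restrict (Set.Ioc (0:ℝ) 1)]
        fun z => z ^ e1 * w z - z ^ e2 * w z := by
      filter_upwards [ae_restrict_mem measurableSet_Ioc] with z hz
      have := mul_le_mul_of_nonneg_right
        (Real.rpow_le_rpow_of_exponent_ge hz.1 hz.2 h12.le) (hwnn z ⟨hz.1.le, hz.2⟩)
      simpa [sub_nonneg] using this
    have hae := (intervalIntegral.integral_eq_zero_iff_of_le_of_nonneg_ae
      (by norm_num) hDnn hDint).1 hDzero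
    have hwz : w =ᵐ[volume.restrict (Set.Ioc (0:ℝ) 1)] 0 := by
      filter_upwards [hae, ae_restrict_mem measurableSet_Ioc,
        ae_restrict_of_ae (cmt_ae_ne 1 volume)] with z hD hz hz1
      have hzlt : z < 1 := lt_of_le_of_ne hz.2 hz1
      have hfac : z ^ e2 < z ^ e1 := Real.rpow_lt_rpow_of_exponent_gt hz.1 hzlt h12
      have : (z ^ e1 - z ^ e2) * w z = 0 := by
        simpa [sub_mul] using hD
      rcases mul_eq_zero.1 this with h' | h'
      · linarith
      · exact h'
    have : (∫ z in (0:ℝ)..1, w z) = 0 := by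
      rw [intervalIntegral.integral_of_le (by norm_num : (0:ℝ) ≤ 1)]
      rw [MeasureTheory.integral_congr_ae hwz]
      simp
    linarith
end

lemma cmt_T_small (T : ℕ → ℝ) (K a β e : ℝ) (hK : K ≠ 0) (hae : a < e)
    (hT : Filter.Tendsto (fun n : ℕ => T n / (K * (n : ℝ) ^ a * Real.log n ^ β))
      Filter.atTop (nhds 1)) :
    ∃ M : ℕ, ∀ n ≥ M, |T n| ≤ (n:ℝ) ^ e := by
  have hlo : Filter.Tendsto (fun x : ℝ => Real.log x ^ β / x ^ (e - a))
      Filter.atTop (nhds 0) :=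
    (isLittleO_log_rpow_rpow_atTop β (by linarith : 0 < e - a)).tendsto_div_nhds_zero
  have hg : Filter.Tendsto
      (fun n : ℕ => (K * (n:ℝ) ^ a * Real.log n ^ β) / (n:ℝ) ^ e)
      Filter.atTop (nhds 0) := by
    have h1 : Filter.Tendsto (fun n : ℕ => K * (Real.log n ^ β / (n:ℝ) ^ (e - a)))
        Filter.atTop (nhds (K * 0)) :=
      (hlo.comp tendsto_natCast_atTop_atTop).const_mul K
    rw [mul_zero] at h1
    apply h1.congr'
    filter_upwards [Filter.eventually_ge_atTop 1] with n hn
    have hn0 : (0:ℝ) < n := by exact_mod_cast hn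
    have hsplit : (n:ℝ) ^ e = (n:ℝ) ^ a * (n:ℝ) ^ (e - a) := by
      rw [← Real.rpow_add hn0]; ring_nf
    have ha0 : (n:ℝ) ^ a ≠ 0 := (Real.rpow_pos_of_pos hn0 a).ne'
    have hea0 : (n:ℝ) ^ (e - a) ≠ 0 := (Real.rpow_pos_of_pos hn0 (e - a)).ne'
    rw [hsplit]
    field_simp
  have hTo : Filter.Tendsto (fun n : ℕ => T n / (n:ℝ) ^ e) Filter.atTop (nhds 0) := by
    have h1 := hT.mul hg
    rw [one_mul] at h1
    apply h1.congr'
    filter_upwards [Filter.eventually_ge_atTop 2] with n hn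
    have hn1 : (1:ℝ) < n := by exact_mod_cast hn
    have hgne : K * (n:ℝ) ^ a * Real.log n ^ β ≠ 0 := by
      apply mul_ne_zero (mul_ne_zero hK (Real.rpow_pos_of_pos (by linarith) a).ne')
      exact (Real.rpow_pos_of_pos (Real.log_pos hn1) β).ne'
    field_simp
    exact mul_div_cancel_right₀ _ (Real.rpow_pos_of_pos (Real.log_pos hn1) β).ne'
  have habs : Filter.Tendsto (fun n : ℕ => |T n / (n:ℝ) ^ e|) Filter.atTop (nhds 0) := by
    have := hTo.abs; simpa using this
  have hev := habs.eventually_lt_const one_pos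
  rw [Filter.eventually_atTop] at hev
  obtain ⟨M, hM⟩ := hev
  refine ⟨max M 1, fun n hn => ?_⟩
  have hn1 : 1 ≤ n := le_trans (le_max_right M 1) hn
  have hne : (0:ℝ) < (n:ℝ) ^ e := Real.rpow_pos_of_pos (by exact_mod_cast hn1) e
  have := hM n (le_trans (le_max_left M 1) hn)
  rw [abs_div, abs_of_pos hne, div_lt_one hne] at this
  exact this.le

set_option maxHeartbeats 1000000 in
/-- **Roura's Continuous Master Theorem, case 3.** If `F n = t n + ∑_{j<n} w_{n,j} F j` for
`n ≥ N` with nonnegative weights, `t n ~ K n^a (ln n)^β`, a shape function `w` with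
`∫_0^1 w ≥ 1` approximating the weights at rate `O(n^{-d})`, and
`H = 1 − ∫_0^1 z^a w(z) dz < 0`, then `F n = O(n^c)` for the unique `c` with
`∫_0^1 z^c w(z) dz = 1`. -/
theorem cmt_case3 (N : ℕ) (W : ℕ → ℕ → ℝ) (F T : ℕ → ℝ) (K a β d : ℝ) (w : ℝ → ℝ)
    (hWnn : ∀ n ≥ N, ∀ j < n, 0 ≤ W n j)
    (hF : ∀ n ≥ N, F n = T n + ∑ j ∈ Finset.range n, W n j * F j)
    (hK : K ≠ 0) (ha : 0 ≤ a) (hβ : -1 < β)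
    (hT : Filter.Tendsto (fun n : ℕ => T n / (K * (n : ℝ) ^ a * Real.log n ^ β))
      Filter.atTop (nhds 1))
    (hwmeas : Measurable w) (hwnn : ∀ z ∈ Set.Icc (0:ℝ) 1, 0 ≤ w z)
    (hwint : 1 ≤ ∫ z in (0:ℝ)..1, w z)
    (hd : 0 < d)
    (happrox : ∃ C : ℝ, ∃ M : ℕ, ∀ n ≥ M,
      (∑ j ∈ Finset.range n,
        |W n j - ∫ z in (j : ℝ) / n..((j : ℝ) + 1) / n, w z|) ≤ C * (n : ℝ) ^ (-d))
    (hH : 1 - ∫ z in (0:ℝ)..1, z ^ a * w z < 0) :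
    ∀ c : ℝ, (∫ z in (0:ℝ)..1, z ^ c * w z) = 1 →
      ∃ C : ℝ, ∃ M : ℕ, ∀ n ≥ M, |F n| ≤ C * (n : ℝ) ^ c := by
  intro c hc
  -- basic integrability
  have hwInt : IntervalIntegrable w volume 0 1 := by
    by_contra h
    rw [intervalIntegral.integral_undef h] at hwint
    linarith
  set Wtot := ∫ z in (0:ℝ)..1, w z with hWtotdef
  have hWtot1 : (1:ℝ) ≤ Wtot := hwint
  -- `a < c`
  have hcInt : IntervalIntegrable (fun z => z ^ c * w z) volume 0 1 := by
    by_contra h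
    rw [intervalIntegral.integral_undef h] at hc
    norm_num at hc
  have hac : a < c := by
    by_contra h
    push_neg at h
    have := cmt_int_mono hwnn h hcInt (cmt_int_pow hwmeas hwInt ha)
    rw [hc] at this
    linarith
  have hcpos : 0 < c := lt_of_le_of_lt ha hac
  -- the auxiliary exponent `c'`
  set c' : ℝ := max (c - d/2) ((a+c)/2) with hc'def
  have hc'pos : 0 < c' := lt_of_lt_of_le (by linarith : (0:ℝ) < (a+c)/2) (le_max_right _ _)
  have hc'lt : c' < c := max_lt (by linarith) (by linarith)
  have hc'a : a < c' := lt_of_lt_of_le (by linarith) (le_max_right _ _)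
  have hcd : c - d < c' := lt_of_lt_of_le (by linarith) (le_max_left _ _)
  -- strictness and η
  set Ic' := ∫ z in (0:ℝ)..1, z ^ c' * w z with hIc'def
  have hIc' : 1 < Ic' := by
    have := cmt_int_strict hwmeas hwnn hwInt hc'pos.le hc'lt hwint
    rw [hc] at this
    exact this
  set η := (Ic' - 1)/3 with hηdef
  have hη : 0 < η := by simp only [hηdef]; linarith
  have hIc'η : Ic' = 1 + 3*η := by simp only [hηdef]; ring
  -- error constant
  obtain ⟨C0, Mx, hx⟩ := happrox
  set Cerr := max C0 0 with hCerrdef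
  have hCerr0 : 0 ≤ Cerr := le_max_right _ _
  have hx' : ∀ n ≥ Mx, (∑ j ∈ Finset.range n,
      |W n j - ∫ z in (j : ℝ) / n..((j : ℝ) + 1) / n, w z|) ≤ Cerr * (n : ℝ) ^ (-d) := by
    intro n hn
    refine (hx n hn).trans ?_
    apply mul_le_mul_of_nonneg_right (le_max_left _ _) (Real.rpow_nonneg (Nat.cast_nonneg n) _)
  -- abbreviation for the interval integrals of w
  set Af : ℕ → ℕ → ℝ := fun n j => ∫ z in (j : ℝ) / n..((j : ℝ) + 1) / n, w z with hAfdef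
  -- comparison of weighted sums
  have hkey : ∀ n : ℕ, 1 ≤ n → Mx ≤ n → ∀ e : ℝ, 0 ≤ e →
      |(∑ j ∈ Finset.range n, ((j:ℝ)/n) ^ e * W n j)
        - ∑ j ∈ Finset.range n, ((j:ℝ)/n) ^ e * Af n j| ≤ Cerr * (n:ℝ) ^ (-d) := by
    intro n hn1 hnMx e he
    have hn0 : (0:ℝ) < n := by exact_mod_cast hn1
    rw [← Finset.sum_sub_distrib]
    refine (Finset.abs_sum_le_sum_abs _ _).trans ?_
    refine le_trans ?_ (hx' n hnMx)
    apply Finset.sum_le_sum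
    intro j hj
    have hj0 : (0:ℝ) ≤ (j:ℝ)/n := by positivity
    have hj1 : (j:ℝ)/n ≤ 1 := by
      rw [div_le_one hn0]
      exact_mod_cast (Finset.mem_range.1 hj).le
    have hpow1 : ((j:ℝ)/n) ^ e ≤ 1 := Real.rpow_le_one hj0 hj1 he
    have hpow0 : 0 ≤ ((j:ℝ)/n) ^ e := Real.rpow_nonneg hj0 e
    calc |((j:ℝ)/n) ^ e * W n j - ((j:ℝ)/n) ^ e * Af n j|
        = ((j:ℝ)/n) ^ e * |W n j - Af n j| := by
          rw [← mul_sub, abs_mul, abs_of_nonneg hpow0]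
      _ ≤ 1 * |W n j - Af n j| := by
          exact mul_le_mul_of_nonneg_right hpow1 (abs_nonneg _)
      _ = |W n j - Af n j| := one_mul _
  -- thresholds
  have hδtend : Filter.Tendsto
      (fun n : ℕ => (max c' 1 * (n:ℝ) ^ (-(min c' 1))) * Wtot) Filter.atTop (nhds 0) := by
    have h1 : Filter.Tendsto (fun n : ℕ => (n:ℝ) ^ (-(min c' 1))) Filter.atTop (nhds 0) :=
      (tendsto_rpow_neg_atTop (lt_min hc'pos one_pos)).comp tendsto_natCast_atTop_atTop
    have := (h1.const_mul (max c' 1)).mul_const Wtot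
    simpa using this
  obtain ⟨M1, hM1⟩ := Filter.eventually_atTop.1 ((hδtend.eventually_lt_const hη).mono
    (fun n h => h.le))
  have herrt : Filter.Tendsto (fun n : ℕ => Cerr * (n:ℝ) ^ (-d)) Filter.atTop (nhds 0) := by
    have h1 : Filter.Tendsto (fun n : ℕ => (n:ℝ) ^ (-d)) Filter.atTop (nhds 0) :=
      (tendsto_rpow_neg_atTop hd).comp tendsto_natCast_atTop_atTop
    simpa using h1.const_mul Cerr
  obtain ⟨M2, hM2⟩ := Filter.eventually_atTop.1 ((herrt.eventually_lt_const hη).mono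
    (fun n h => h.le))
  -- threshold for Cerr * n^(-d) * n^c ≤ (η/4) * n^(c')
  have hE3t : Filter.Tendsto (fun n : ℕ => Cerr * (n:ℝ) ^ (c - d - c'))
      Filter.atTop (nhds 0) := by
    have h1 : Filter.Tendsto (fun n : ℕ => (n:ℝ) ^ (-(c' + d - c))) Filter.atTop (nhds 0) :=
      (tendsto_rpow_neg_atTop (by linarith)).comp tendsto_natCast_atTop_atTop
    have h2 := h1.const_mul Cerr
    rw [mul_zero] at h2
    apply h2.congr
    intro n
    ring_nf
  obtain ⟨M3', hM3'⟩ := Filter.eventually_atTop.1 ((hE3t.eventually_lt_const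
    (by positivity : (0:ℝ) < η/4)).mono (fun n h => h.le))
  set M3 := max M3' 1 with hM3def
  have hM3 : ∀ n ≥ M3, Cerr * (n:ℝ) ^ (-d) * (n:ℝ) ^ c ≤ (η/4) * (n:ℝ) ^ c' := by
    intro n hn
    have hn1 : 1 ≤ n := le_trans (le_max_right _ _) hn
    have hn0 : (0:ℝ) < n := by exact_mod_cast hn1
    have h1 := hM3' n (le_trans (le_max_left _ _) hn)
    have hsplit : (n:ℝ) ^ (-d) * (n:ℝ) ^ c = (n:ℝ) ^ (c - d - c') * (n:ℝ) ^ c' := by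
      rw [← Real.rpow_add hn0, ← Real.rpow_add hn0]
      ring_nf
    have hcp : (0:ℝ) ≤ (n:ℝ) ^ c' := Real.rpow_nonneg hn0.le _
    calc Cerr * (n:ℝ) ^ (-d) * (n:ℝ) ^ c
        = (Cerr * (n:ℝ) ^ (c - d - c')) * (n:ℝ) ^ c' := by rw [mul_assoc, hsplit]; ring
      _ ≤ (η/4) * (n:ℝ) ^ c' := mul_le_mul_of_nonneg_right h1 hcp
  -- threshold for |T n| ≤ n ^ c'
  obtain ⟨MT, hMT⟩ := cmt_T_small T K a β c' hK hc'a hT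
  -- the base threshold M0
  set M0 := N + Mx + M1 + M2 + M3 + MT + 2 with hM0def
  have hM02 : 2 ≤ M0 := by omega
  -- constants
  set B0 := (Wtot + Cerr) * ∑ j ∈ Finset.range M0, |F j| with hB0def
  have hB0nn : 0 ≤ B0 := by
    apply mul_nonneg (by linarith)
    exact Finset.sum_nonneg fun j _ => abs_nonneg _
  set K0 := (M0:ℝ) * ((Wtot + Cerr) * (M0:ℝ) ^ c') with hK0def
  have hK0nn : 0 ≤ K0 := by
    apply mul_nonneg (Nat.cast_nonneg _)
    exact mul_nonneg (by linarith) (Real.rpow_nonneg (Nat.cast_nonneg _) _)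
  -- threshold M5 for K0
  have h5t : Filter.Tendsto (fun n : ℕ => (n:ℝ) ^ c') Filter.atTop Filter.atTop :=
    (tendsto_rpow_atTop hc'pos).comp tendsto_natCast_atTop_atTop
  obtain ⟨M5, hM5⟩ := Filter.eventually_atTop.1 (h5t.eventually_ge_atTop (K0 / (η/4)))
  have hE5' : ∀ n : ℕ, M5 ≤ n → K0 ≤ (η/4) * (n:ℝ) ^ c' := by
    intro n hn
    have := hM5 n hn
    rw [div_le_iff₀ (by positivity : (0:ℝ) < η/4)] at this
    linarith
  set Mf := M0 + M5 with hMfdef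
  -- the constant C
  set C := max ((2/η) * (1 + B0))
    (∑ m ∈ Finset.Ico M0 Mf, |F m| / ((m:ℝ) ^ c - (m:ℝ) ^ c')) with hCdef
  have hC1 : (2/η) * (1 + B0) ≤ C := le_max_left _ _
  have hC0 : 0 ≤ C := le_trans (by positivity) hC1
  have hDpos : ∀ n : ℕ, 2 ≤ n → 0 < (n:ℝ) ^ c - (n:ℝ) ^ c' := by
    intro n hn
    have hn1 : (1:ℝ) < n := by exact_mod_cast hn
    have := Real.rpow_lt_rpow_of_exponent_lt hn1 hc'lt
    linarith
  have hCbase : ∀ n : ℕ, M0 ≤ n → n < Mf → |F n| ≤ C * ((n:ℝ) ^ c - (n:ℝ) ^ c') := by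
    intro n h1 h2
    have hD := hDpos n (le_trans hM02 h1)
    have hterm : |F n| / ((n:ℝ) ^ c - (n:ℝ) ^ c') ≤ C := by
      refine le_trans ?_ (le_max_right _ _)
      refine Finset.single_le_sum (f := fun m : ℕ => |F m| / ((m:ℝ) ^ c - (m:ℝ) ^ c'))
        ?_ (Finset.mem_Ico.2 ⟨h1, h2⟩)
      intro m hm
      have := hDpos m (le_trans hM02 (Finset.mem_Ico.1 hm).1)
      positivity
    calc |F n| = (|F n| / ((n:ℝ) ^ c - (n:ℝ) ^ c')) * ((n:ℝ) ^ c - (n:ℝ) ^ c') := by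
          field_simp
      _ ≤ C * ((n:ℝ) ^ c - (n:ℝ) ^ c') := mul_le_mul_of_nonneg_right hterm hD.le
  -- the main induction
  have main : ∀ n : ℕ, M0 ≤ n → |F n| ≤ C * ((n:ℝ) ^ c - (n:ℝ) ^ c') := by
    intro n
    induction n using Nat.strong_induction_on with
    | _ n IH =>
    intro hn
    rcases lt_or_ge n Mf with hlt | hge
    · exact hCbase n hn hlt
    -- large case
    have hn2 : 2 ≤ n := le_trans hM02 hn
    have hn1 : 1 ≤ n := by omega
    have hnR0 : (0:ℝ) < n := by exact_mod_cast hn1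
    have hnN : N ≤ n := by omega
    have hnMx : Mx ≤ n := by omega
    have hnM1 : M1 ≤ n := by omega
    have hnM2 : M2 ≤ n := by omega
    have hnM3 : M3 ≤ n := by omega
    have hnMT : MT ≤ n := by omega
    have hnM5 : M5 ≤ n := by omega
    have hY1 : (1:ℝ) ≤ (n:ℝ) ^ c' := by
      have h := Real.rpow_le_rpow_of_exponent_le (by exact_mod_cast hn1 : (1:ℝ) ≤ n)
        hc'pos.le
      rwa [Real.rpow_zero] at h
    have hY0 : (0:ℝ) ≤ (n:ℝ) ^ c' := by linarith
    have hX0 : (0:ℝ) ≤ (n:ℝ) ^ c := Real.rpow_nonneg hnR0.le c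
    -- sum of interval integrals
    have hAfsum : ∑ j ∈ Finset.range n, Af n j = Wtot := by
      simp only [hAfdef]
      exact cmt_adj hwInt hn1
    -- uniform bound on the weights
    have hWb : ∀ j < n, W n j ≤ Wtot + Cerr := by
      have h2 : ∑ k ∈ Finset.range n, W n k ≤ Wtot + Cerr * (n:ℝ) ^ (-d) := by
        have h21 : ∀ k ∈ Finset.range n, W n k ≤ Af n k + |W n k - Af n k| := by
          intro k _
          linarith [le_abs_self (W n k - Af n k)]
        calc ∑ k ∈ Finset.range n, W n k
            ≤ ∑ k ∈ Finset.range n, (Af n k + |W n k - Af n k|) :=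
              Finset.sum_le_sum h21
          _ = (∑ k ∈ Finset.range n, Af n k) + ∑ k ∈ Finset.range n, |W n k - Af n k| :=
              Finset.sum_add_distrib
          _ ≤ Wtot + Cerr * (n:ℝ) ^ (-d) := by
              rw [hAfsum]
              exact add_le_add_right (hx' n hnMx) _
      have h3 : Cerr * (n:ℝ) ^ (-d) ≤ Cerr := by
        nth_rewrite 2 [← mul_one Cerr]
        apply mul_le_mul_of_nonneg_left ?_ hCerr0
        exact Real.rpow_le_one_of_one_le_of_nonpos (by exact_mod_cast hn1) (by linarith)
      intro j hj
      have h1 : W n j ≤ ∑ k ∈ Finset.range n, W n k :=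
        Finset.single_le_sum (fun k hk => hWnn n hnN k (Finset.mem_range.1 hk))
          (Finset.mem_range.2 hj)
      linarith
    -- Riemann sum bounds for the weights
    have hScUp : ∑ j ∈ Finset.range n, ((j:ℝ)/n) ^ c * W n j ≤ 1 + Cerr * (n:ℝ) ^ (-d) := by
      have hr' : ∑ j ∈ Finset.range n, ((j:ℝ)/n) ^ c * Af n j ≤ 1 := by
        simp only [hAfdef]
        have hr := cmt_riemann_upper hwmeas hwnn hwInt hn1 hcpos.le
        rw [hc] at hr
        exact hr
      have hk := hkey n hn1 hnMx c hcpos.le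
      have := (le_abs_self (_ : ℝ)).trans hk
      linarith [this]
    have hSc'Low : 1 + η ≤ ∑ j ∈ Finset.range n, ((j:ℝ)/n) ^ c' * W n j := by
      have hr : Ic' ≤ (∑ j ∈ Finset.range n, ((j:ℝ)/n) ^ c' * Af n j)
          + (max c' 1 * (n:ℝ) ^ (-(min c' 1))) * Wtot := by
        have h0 := cmt_riemann_lower hwmeas hwnn hwInt hn1 hc'pos
        simp only [hAfdef]
        exact h0
      have h1 := hM1 n hnM1
      have h2 := hM2 n hnM2
      have hk := hkey n hn1 hnMx c' hc'pos.le
      have h3 := (neg_le_of_abs_le hk)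
      rw [hIc'η] at hr
      linarith
    -- conversion between scaled and unscaled sums
    have hconv : ∀ e : ℝ, 0 < e →
        ∑ j ∈ Finset.range n, W n j * (j:ℝ) ^ e
          = (n:ℝ) ^ e * ∑ j ∈ Finset.range n, ((j:ℝ)/n) ^ e * W n j := by
      intro e he
      rw [Finset.mul_sum]
      apply Finset.sum_congr rfl
      intro j _
      rw [Real.div_rpow (Nat.cast_nonneg j) hnR0.le]
      have hne : ((n:ℝ) ^ e) ≠ 0 := (Real.rpow_pos_of_pos hnR0 e).ne'
      field_simp
    have hupW : ∑ j ∈ Finset.range n, W n j * (j:ℝ) ^ c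
        ≤ (n:ℝ) ^ c * (1 + Cerr * (n:ℝ) ^ (-d)) := by
      rw [hconv c hcpos]
      exact mul_le_mul_of_nonneg_left hScUp hX0
    have hlowW : (n:ℝ) ^ c' * (1 + η) ≤ ∑ j ∈ Finset.range n, W n j * (j:ℝ) ^ c' := by
      rw [hconv c' hc'pos]
      exact mul_le_mul_of_nonneg_left hSc'Low hY0
    -- split the recurrence sum
    have hrec : |F n| ≤ |T n| + ∑ j ∈ Finset.range n, W n j * |F j| := by
      rw [hF n hnN]
      refine (abs_add_le _ _).trans (add_le_add_right ?_ _)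
      refine (Finset.abs_sum_le_sum_abs _ _).trans_eq ?_
      refine Finset.sum_congr rfl fun j hj => ?_
      rw [abs_mul, abs_of_nonneg (hWnn n hnN j (Finset.mem_range.1 hj))]
    have hsplitF : ∑ j ∈ Finset.range n, W n j * |F j|
        = (∑ j ∈ Finset.range M0, W n j * |F j|)
          + ∑ j ∈ Finset.Ico M0 n, W n j * |F j| :=
      (Finset.sum_range_add_sum_Ico _ hn).symm
    have hpart1 : ∑ j ∈ Finset.range M0, W n j * |F j| ≤ B0 := by
      rw [hB0def, Finset.mul_sum]
      refine Finset.sum_le_sum fun j hj => ?_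
      have hjn : j < n := lt_of_lt_of_le (Finset.mem_range.1 hj) hn
      exact mul_le_mul_of_nonneg_right (hWb j hjn) (abs_nonneg _)
    have hIHsum : ∑ j ∈ Finset.Ico M0 n, W n j * |F j|
        ≤ C * ((∑ j ∈ Finset.Ico M0 n, W n j * (j:ℝ) ^ c)
          - (∑ j ∈ Finset.Ico M0 n, W n j * (j:ℝ) ^ c')) := by
      calc ∑ j ∈ Finset.Ico M0 n, W n j * |F j|
          ≤ ∑ j ∈ Finset.Ico M0 n, C * (W n j * (j:ℝ) ^ c - W n j * (j:ℝ) ^ c') := by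
            refine Finset.sum_le_sum fun j hj => ?_
            obtain ⟨hj1, hj2⟩ := Finset.mem_Ico.1 hj
            have hIHj := IH j hj2 hj1
            calc W n j * |F j| ≤ W n j * (C * ((j:ℝ) ^ c - (j:ℝ) ^ c')) :=
                  mul_le_mul_of_nonneg_left hIHj (hWnn n hnN j hj2)
              _ = C * (W n j * (j:ℝ) ^ c - W n j * (j:ℝ) ^ c') := by ring
        _ = C * ((∑ j ∈ Finset.Ico M0 n, W n j * (j:ℝ) ^ c)
            - (∑ j ∈ Finset.Ico M0 n, W n j * (j:ℝ) ^ c')) := by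
            rw [← Finset.mul_sum, Finset.sum_sub_distrib]
    -- compare the Ico sums with the full range sums
    have t1 : ∑ j ∈ Finset.Ico M0 n, W n j * (j:ℝ) ^ c
        ≤ ∑ j ∈ Finset.range n, W n j * (j:ℝ) ^ c := by
      refine Finset.sum_le_sum_of_subset_of_nonneg ?_ ?_
      · intro j hj
        exact Finset.mem_range.2 (Finset.mem_Ico.1 hj).2
      · intro j hj _
        exact mul_nonneg (hWnn n hnN j (Finset.mem_range.1 hj))
          (Real.rpow_nonneg (Nat.cast_nonneg j) _)
    have t2 : ∑ j ∈ Finset.range M0, W n j * (j:ℝ) ^ c' ≤ K0 := by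
      have hbd : ∀ j ∈ Finset.range M0, W n j * (j:ℝ) ^ c'
          ≤ (Wtot + Cerr) * (M0:ℝ) ^ c' := by
        intro j hj
        have hjM0 : j < M0 := Finset.mem_range.1 hj
        have hjn : j < n := lt_of_lt_of_le hjM0 hn
        refine mul_le_mul (hWb j hjn) ?_ (Real.rpow_nonneg (Nat.cast_nonneg j) _)
          (by linarith)
        exact Real.rpow_le_rpow (Nat.cast_nonneg j)
          (by exact_mod_cast hjM0.le) hc'pos.le
      calc ∑ j ∈ Finset.range M0, W n j * (j:ℝ) ^ c'
          ≤ ∑ _j ∈ Finset.range M0, (Wtot + Cerr) * (M0:ℝ) ^ c' :=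
            Finset.sum_le_sum hbd
        _ = K0 := by
            rw [Finset.sum_const, Finset.card_range, nsmul_eq_mul, hK0def]
    have t3 : (∑ j ∈ Finset.range n, W n j * (j:ℝ) ^ c') - K0
        ≤ ∑ j ∈ Finset.Ico M0 n, W n j * (j:ℝ) ^ c' := by
      have := (Finset.sum_range_add_sum_Ico (fun j => W n j * (j:ℝ) ^ c') hn).symm
      linarith
    -- the numeric facts
    have hTb : |T n| ≤ (n:ℝ) ^ c' := hMT n hnMT
    have hE3 : Cerr * (n:ℝ) ^ (-d) * (n:ℝ) ^ c ≤ (η/4) * (n:ℝ) ^ c' := hM3 n hnM3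
    have hE5 : K0 ≤ (η/4) * (n:ℝ) ^ c' := hE5' n hnM5
    -- products with C
    have u1 : C * (∑ j ∈ Finset.Ico M0 n, W n j * (j:ℝ) ^ c)
        ≤ C * ((n:ℝ) ^ c * (1 + Cerr * (n:ℝ) ^ (-d))) :=
      mul_le_mul_of_nonneg_left (t1.trans hupW) hC0
    have u2 : C * ((n:ℝ) ^ c' * (1 + η) - K0)
        ≤ C * (∑ j ∈ Finset.Ico M0 n, W n j * (j:ℝ) ^ c') :=
      mul_le_mul_of_nonneg_left (by linarith) hC0
    have u0 : C * ((∑ j ∈ Finset.Ico M0 n, W n j * (j:ℝ) ^ c)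
        - (∑ j ∈ Finset.Ico M0 n, W n j * (j:ℝ) ^ c'))
        = C * (∑ j ∈ Finset.Ico M0 n, W n j * (j:ℝ) ^ c)
          - C * (∑ j ∈ Finset.Ico M0 n, W n j * (j:ℝ) ^ c') := by ring
    have u3 : C * (Cerr * (n:ℝ) ^ (-d) * (n:ℝ) ^ c) ≤ C * ((η/4) * (n:ℝ) ^ c') :=
      mul_le_mul_of_nonneg_left hE3 hC0
    have u4 : C * K0 ≤ C * ((η/4) * (n:ℝ) ^ c') :=
      mul_le_mul_of_nonneg_left hE5 hC0
    have u5 : 2 * (1 + B0) ≤ η * C := by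
      have h1 : η * ((2/η) * (1 + B0)) ≤ η * C := mul_le_mul_of_nonneg_left hC1 hη.le
      have h2 : η * ((2/η) * (1 + B0)) = 2 * (1 + B0) := by
        field_simp
      linarith
    have u6 : (2 * (1 + B0)) * (n:ℝ) ^ c' ≤ (η * C) * (n:ℝ) ^ c' :=
      mul_le_mul_of_nonneg_right u5 hY0
    have u7 : B0 * 1 ≤ B0 * (n:ℝ) ^ c' := mul_le_mul_of_nonneg_left hY1 hB0nn
    linarith [hrec, hsplitF, hpart1, hIHsum, u0, u1, u2, u3, u4, u6, u7, hTb, hY1, hB0nn]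
  refine ⟨C, M0, fun n hn => ?_⟩
  have h := main n hn
  have hY0 : (0:ℝ) ≤ (n:ℝ) ^ c' := Real.rpow_nonneg (Nat.cast_nonneg n) _
  linarith [mul_nonneg hC0 hY0]
end

section
/- Let c_1, c_2 ∈ ℕ be fixed constants and let α, β ≥ 1 be integers. For n > c_1 let J = c_2 + I where I ~ BetaBin(n−c_1, α, β). Then for every fixed h ∈ (0,1), E[(J/n)·ln(J/n)] = (α/(α+β))·(H_α − H_{α+β}) ± O(n^{−h}) as n → ∞, where the convention 0·ln 0 = 0 is used. -/
open scoped Classical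

/-- The beta function `B(a,b) = ∫_0^1 z^(a-1) (1-z)^(b-1) dz`. -/
noncomputable def betaFun (a b : ℝ) : ℝ := ∫ z in (0:ℝ)..1, z ^ (a - 1) * (1 - z) ^ (b - 1)

/-- The regularized incomplete beta function `I_{x,y}(a,b)`. -/
noncomputable def regIncBeta (x y a b : ℝ) : ℝ :=
  (∫ z in x..y, z ^ (a - 1) * (1 - z) ^ (b - 1)) / betaFun a b

/-- The probability `P(I = i)` for `I ~ BetaBin(n,a,b)`. -/
noncomputable def betaBinPMF (n : ℕ) (a b : ℝ) (i : ℕ) : ℝ :=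
  (n.choose i : ℝ) * betaFun (a + i) (b + ((n - i : ℕ) : ℝ)) / betaFun a b

/-- The `m`-th harmonic number. -/
noncomputable def harm (m : ℕ) : ℝ := ∑ i ∈ Finset.range m, (1 : ℝ) / (i + 1)

set_option maxHeartbeats 1000000

lemma integral_pow_one_sub_pow (q : ℕ) : ∀ p : ℕ,
    ∫ x in (0:ℝ)..1, x ^ p * (1 - x) ^ q
      = (p.factorial * q.factorial : ℝ) / (p + q + 1).factorial := by
  induction q with
  | zero =>
    intro p
    simp only [pow_zero, mul_one, integral_pow, Nat.factorial_zero, Nat.add_zero,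
      Nat.mul_one, one_pow]
    rw [Nat.factorial_succ]
    push_cast
    have : ((p:ℝ) + 1) ≠ 0 := by positivity
    field_simp
    simp
  | succ q ih =>
    intro p
    have hu : ∀ x ∈ Set.uIcc (0:ℝ) 1, HasDerivAt (fun x : ℝ => (1 - x) ^ (q + 1))
        (-(((q:ℝ) + 1) * (1 - x) ^ q)) x := by
      intro x _
      have h1 : HasDerivAt (fun x : ℝ => 1 - x) (-1) x := (hasDerivAt_id x).const_sub 1
      have := h1.pow (q + 1)
      exact this.congr_deriv (by push_cast; ring)
    have hv : ∀ x ∈ Set.uIcc (0:ℝ) 1, HasDerivAt (fun x : ℝ => x ^ (p + 1) / ((p:ℝ) + 1))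
        (x ^ p) x := by
      intro x _
      have := (hasDerivAt_pow (p + 1) x).div_const ((p:ℝ) + 1)
      apply this.congr_deriv
      have : ((p:ℝ) + 1) ≠ 0 := by positivity
      push_cast
      field_simp
    have hInt1 : IntervalIntegrable (fun x : ℝ => -(((q:ℝ) + 1) * (1 - x) ^ q)) MeasureTheory.volume 0 1 := by
      apply Continuous.intervalIntegrable; continuity
    have hInt2 : IntervalIntegrable (fun x : ℝ => x ^ p) MeasureTheory.volume 0 1 := by
      apply Continuous.intervalIntegrable; continuity
    have key := intervalIntegral.integral_mul_deriv_eq_deriv_mul hu hv hInt1 hInt2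
    have e1 : ∫ x in (0:ℝ)..1, x ^ p * (1 - x) ^ (q + 1)
        = ∫ x in (0:ℝ)..1, (1 - x) ^ (q + 1) * x ^ p := by
      congr 1; ext x; ring
    rw [e1, key]
    have e2 : ∫ x in (0:ℝ)..1, -(((q:ℝ) + 1) * (1 - x) ^ q) * (x ^ (p + 1) / ((p:ℝ) + 1))
        = (-((q:ℝ) + 1) / ((p:ℝ) + 1)) * ∫ x in (0:ℝ)..1, x ^ (p + 1) * (1 - x) ^ q := by
      rw [← intervalIntegral.integral_const_mul]
      congr 1; ext x
      have : ((p:ℝ) + 1) ≠ 0 := by positivity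
      field_simp
    rw [e2, ih (p + 1)]
    have hfq : ((q:ℝ) + 1) * q.factorial = (q + 1).factorial := by
      rw [Nat.factorial_succ]; push_cast; ring
    have hfp : ((p:ℝ) + 1) * p.factorial = (p + 1).factorial := by
      rw [Nat.factorial_succ]; push_cast; ring
    have hidx : p + 1 + q + 1 = p + (q + 1) + 1 := by omega
    rw [hidx]
    have h1 : ((p + (q+1) + 1).factorial : ℝ) ≠ 0 := by positivity
    have h2 : ((p:ℝ) + 1) ≠ 0 := by positivity
    have h3 : ((p+1).factorial : ℝ) = ((p:ℝ)+1) * p.factorial := hfp.symm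
    have h4 : (((q+1)).factorial : ℝ) = ((q:ℝ)+1) * q.factorial := hfq.symm
    simp only [pow_succ, pow_zero, one_mul, sub_self, zero_pow, mul_zero, zero_mul, sub_zero,
      zero_div]
    rw [h3, h4]
    field_simp
    ring

lemma betaFun_nat (a b : ℕ) :
    betaFun ((a:ℝ) + 1) ((b:ℝ) + 1) = (a.factorial * b.factorial : ℝ) / (a + b + 1).factorial := by
  have h : betaFun ((a:ℝ) + 1) ((b:ℝ) + 1) = ∫ z in (0:ℝ)..1, z ^ a * (1 - z) ^ b := by
    unfold betaFun
    simp only [add_sub_cancel_right, Real.rpow_natCast]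
  rw [h, integral_pow_one_sub_pow b a]

noncomputable def P (m a b i : ℕ) : ℝ :=
  (m.choose i : ℝ) * (a + i).factorial * (b + (m - i)).factorial * (a + b + 1).factorial
    / ((a + b + m + 1).factorial * a.factorial * b.factorial)

lemma P_nonneg (m a b i : ℕ) : 0 ≤ P m a b i := by
  unfold P; positivity

lemma pmf_eq (m a b i : ℕ) (hi : i ≤ m) :
    betaBinPMF m ((a + 1 : ℕ) : ℝ) ((b + 1 : ℕ) : ℝ) i = P m a b i := by
  unfold betaBinPMF
  have e1 : ((a + 1 : ℕ) : ℝ) + (i : ℝ) = ((a + i : ℕ) : ℝ) + 1 := by push_cast; ring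
  have e2 : ((b + 1 : ℕ) : ℝ) + ((m - i : ℕ) : ℝ) = ((b + (m - i) : ℕ) : ℝ) + 1 := by
    push_cast; ring
  have e3 : ((a + 1 : ℕ) : ℝ) = ((a : ℕ) : ℝ) + 1 := by push_cast; ring
  have e4 : ((b + 1 : ℕ) : ℝ) = ((b : ℕ) : ℝ) + 1 := by push_cast; ring
  rw [e1, e2, e3, e4, betaFun_nat, betaFun_nat]
  have e5 : (a + i) + (b + (m - i)) + 1 = a + b + m + 1 := by omega
  rw [e5]
  unfold P
  have n1 : ((a + b + m + 1).factorial : ℝ) ≠ 0 := by positivity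
  have n2 : (a.factorial : ℝ) ≠ 0 := by positivity
  have n3 : (b.factorial : ℝ) ≠ 0 := by positivity
  have n4 : ((a + b + 1).factorial : ℝ) ≠ 0 := by positivity
  field_simp

lemma transfer (m a b : ℕ) (f : ℕ → ℝ) :
    ∑ i ∈ Finset.range (m + 2), P (m + 1) a b i * f i
      = ∑ i ∈ Finset.range (m + 1),
          P m a b i * (((b + 1 + (m - i) : ℕ) : ℝ) * f i + ((a + 1 + i : ℕ) : ℝ) * f (i + 1))
            / ((a + b + m + 2 : ℕ) : ℝ) := by
  set w : ℕ → ℝ := fun i =>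
    ((a + i).factorial * (b + (m + 1 - i)).factorial * (a + b + 1).factorial : ℝ)
      / ((a + b + m + 2).factorial * a.factorial * b.factorial) with hw
  have step1 : ∀ i, P (m + 1) a b i = ((m + 1).choose i : ℝ) * w i := by
    intro i
    unfold P
    rw [hw]
    have : a + b + (m + 1) + 1 = a + b + m + 2 := by omega
    rw [this]
    push_cast
    ring
  calc ∑ i ∈ Finset.range (m + 2), P (m + 1) a b i * f i
      = ∑ i ∈ Finset.range (m + 2), ((m + 1).choose i : ℝ) * w i * f i := by
        refine Finset.sum_congr rfl fun i _ => by rw [step1]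
    _ = (∑ i ∈ Finset.range (m + 1), ((m + 1).choose (i + 1) : ℝ) * w (i + 1) * f (i + 1))
          + ((m + 1).choose 0 : ℝ) * w 0 * f 0 :=
        Finset.sum_range_succ' _ (m + 1)
    _ = (∑ i ∈ Finset.range (m + 1), (m.choose i : ℝ) * w (i + 1) * f (i + 1))
          + ((∑ i ∈ Finset.range (m + 1), (m.choose (i + 1) : ℝ) * w (i + 1) * f (i + 1))
              + (m.choose 0 : ℝ) * w 0 * f 0) := by
        have hper : ∀ i ∈ Finset.range (m + 1),
            ((m + 1).choose (i + 1) : ℝ) * w (i + 1) * f (i + 1)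
              = (m.choose i : ℝ) * w (i + 1) * f (i + 1)
                + (m.choose (i + 1) : ℝ) * w (i + 1) * f (i + 1) := by
          intro i _
          rw [Nat.choose_succ_succ]
          push_cast
          ring
        rw [Finset.sum_congr rfl hper, Finset.sum_add_distrib]
        simp only [Nat.choose_zero_right]
        ring
    _ = (∑ i ∈ Finset.range (m + 1), (m.choose i : ℝ) * w (i + 1) * f (i + 1))
          + ∑ i ∈ Finset.range (m + 2), (m.choose i : ℝ) * w i * f i := by
        rw [Finset.sum_range_succ' (fun i => (m.choose i : ℝ) * w i * f i) (m + 1)]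
    _ = ∑ i ∈ Finset.range (m + 1),
          ((m.choose i : ℝ) * w (i + 1) * f (i + 1) + (m.choose i : ℝ) * w i * f i) := by
        rw [Finset.sum_range_succ (fun i => (m.choose i : ℝ) * w i * f i) (m + 1)]
        simp only [Nat.choose_succ_self, Nat.cast_zero, zero_mul, add_zero]
        rw [← Finset.sum_add_distrib]
    _ = ∑ i ∈ Finset.range (m + 1),
          P m a b i * (((b + 1 + (m - i) : ℕ) : ℝ) * f i + ((a + 1 + i : ℕ) : ℝ) * f (i + 1))
            / ((a + b + m + 2 : ℕ) : ℝ) := by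
        refine Finset.sum_congr rfl fun i hi => ?_
        have hi' : i ≤ m := by simpa [Nat.lt_succ_iff] using hi
        obtain ⟨r, rfl⟩ : ∃ r, m = i + r := ⟨m - i, by omega⟩
        have h1 : i + r - i = r := by omega
        have h2 : i + r + 1 - i = r + 1 := by omega
        have h3 : i + r + 1 - (i + 1) = r := by omega
        rw [hw]
        simp only [h1, h2, h3]
        unfold P
        simp only [h1]
        have e1 : a + (i + 1) = (a + i) + 1 := by omega
        have e2 : b + (r + 1) = (b + r) + 1 := by omega
        have e3 : a + b + (i + r) + 2 = (a + b + (i + r) + 1) + 1 := by omega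
        have e4 : b + 1 + r = (b + r) + 1 := by omega
        have e5 : a + 1 + i = (a + i) + 1 := by omega
        rw [e1, e2, e3, e4, e5]
        simp only [Nat.factorial_succ]
        have n0 : ((a + b + (i + r) + 2 : ℕ) : ℝ) ≠ 0 := by positivity
        have n1 : ((a + b + (i + r) + 1).factorial : ℝ) ≠ 0 := by positivity
        have n2 : (a.factorial : ℝ) ≠ 0 := by positivity
        have n3 : (b.factorial : ℝ) ≠ 0 := by positivity
        have e6 : ((a + b + (i + r) + 2 : ℕ) : ℝ) = ((a + b + (i + r) + 1 : ℕ) : ℝ) + 1 := by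
          push_cast; ring
        rw [e6] at n0 ⊢
        push_cast
        field_simp
        ring

lemma P_zero (a b : ℕ) : P 0 a b 0 = 1 := by
  unfold P
  simp only [Nat.choose_self, Nat.cast_one, one_mul, Nat.add_zero, Nat.sub_zero]
  have e : a + b + 0 + 1 = a + b + 1 := by omega
  rw [e]
  have n1 : ((a + b + 1).factorial : ℝ) ≠ 0 := by positivity
  have n2 : (a.factorial : ℝ) ≠ 0 := by positivity
  have n3 : (b.factorial : ℝ) ≠ 0 := by positivity
  field_simp

lemma sum_P (a b : ℕ) : ∀ m, ∑ i ∈ Finset.range (m + 1), P m a b i = 1 := by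
  intro m
  induction m with
  | zero => simpa using P_zero a b
  | succ m ih =>
    have h := transfer m a b (fun _ => (1 : ℝ))
    simp only [mul_one] at h
    calc ∑ i ∈ Finset.range (m + 1 + 1), P (m + 1) a b i
        = ∑ i ∈ Finset.range (m + 2), P (m + 1) a b i * 1 := by simp
      _ = ∑ i ∈ Finset.range (m + 1),
            P m a b i * (((b + 1 + (m - i) : ℕ) : ℝ) * 1 + ((a + 1 + i : ℕ) : ℝ) * 1)
              / ((a + b + m + 2 : ℕ) : ℝ) := transfer m a b (fun _ => (1 : ℝ))
      _ = ∑ i ∈ Finset.range (m + 1), P m a b i := by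
          refine Finset.sum_congr rfl fun i hi => ?_
          have hi' : i ≤ m := by simpa [Nat.lt_succ_iff] using hi
          have e : (b + 1 + (m - i)) + (a + 1 + i) = a + b + m + 2 := by omega
          have n0 : ((a + b + m + 2 : ℕ) : ℝ) ≠ 0 := by positivity
          rw [mul_one, mul_one, ← Nat.cast_add, e]
          field_simp
      _ = 1 := ih

noncomputable def G (j s : ℕ) : ℝ := ((j : ℝ) / (s : ℝ)) * (harm j - harm s)

lemma harm_succ (k : ℕ) : harm (k + 1) = harm k + 1 / ((k : ℝ) + 1) := by
  unfold harm
  rw [Finset.sum_range_succ]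

lemma G_step (j t s : ℕ) (hj : 1 ≤ j) (hs : j + t = s) :
    (((t : ℕ) : ℝ) * G j (s + 1) + ((j : ℕ) : ℝ) * G (j + 1) (s + 1)) / ((s : ℕ) : ℝ)
      = G j s := by
  unfold G
  rw [harm_succ j, harm_succ s]
  have hsj : (s : ℝ) = (j : ℝ) + (t : ℝ) := by exact_mod_cast congrArg (Nat.cast (R := ℝ)) hs.symm
  have hj0 : (0 : ℝ) < (j : ℝ) := by exact_mod_cast hj
  have hs0 : (0 : ℝ) < (s : ℝ) := by
    rw [hsj]; positivity
  have hs1 : ((s : ℝ) + 1) ≠ 0 := by positivity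
  have hj1 : ((j : ℝ) + 1) ≠ 0 := by positivity
  push_cast
  rw [hsj]
  field_simp
  ring

lemma key (a b : ℕ) : ∀ m, ∑ i ∈ Finset.range (m + 1), P m a b i * G (a + 1 + i) (a + b + m + 2)
    = G (a + 1) (a + b + 2) := by
  intro m
  induction m with
  | zero =>
    rw [Finset.sum_range_one, P_zero, one_mul]
  | succ m ih =>
    have e0 : a + b + (m + 1) + 2 = a + b + m + 3 := by omega
    calc ∑ i ∈ Finset.range (m + 1 + 1), P (m + 1) a b i * G (a + 1 + i) (a + b + (m + 1) + 2)
        = ∑ i ∈ Finset.range (m + 2), P (m + 1) a b i * (fun i => G (a + 1 + i) (a + b + m + 3)) i := by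
          rw [e0]
      _ = ∑ i ∈ Finset.range (m + 1),
            P m a b i * (((b + 1 + (m - i) : ℕ) : ℝ) * G (a + 1 + i) (a + b + m + 3)
              + ((a + 1 + i : ℕ) : ℝ) * G (a + 1 + (i + 1)) (a + b + m + 3))
              / ((a + b + m + 2 : ℕ) : ℝ) := transfer m a b _
      _ = ∑ i ∈ Finset.range (m + 1), P m a b i * G (a + 1 + i) (a + b + m + 2) := by
          refine Finset.sum_congr rfl fun i hi => ?_
          have hi' : i ≤ m := by simpa [Nat.lt_succ_iff] using hi
          have hstep := G_step (a + 1 + i) (b + 1 + (m - i)) (a + b + m + 2)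
            (by omega) (by omega)
          have e1 : a + b + m + 3 = (a + b + m + 2) + 1 := by omega
          have e2 : a + 1 + (i + 1) = (a + 1 + i) + 1 := by omega
          rw [e1, e2, mul_div_assoc, hstep]
      _ = G (a + 1) (a + b + 2) := ih

lemma harm_nonneg (m : ℕ) : 0 ≤ harm m := by
  unfold harm
  positivity

lemma harm_mono {j s : ℕ} (h : j ≤ s) : harm j ≤ harm s := by
  unfold harm
  apply Finset.sum_le_sum_of_subset_of_nonneg (Finset.range_subset_range.mpr h)
  intro i _ _
  positivity

lemma log_succ_ge (t : ℕ) (ht : 1 ≤ t) :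
    1 / ((t : ℝ) + 1) ≤ Real.log ((t : ℝ) + 1) - Real.log t := by
  have ht0 : (0 : ℝ) < (t : ℝ) := by exact_mod_cast ht
  have ht1 : (0 : ℝ) < (t : ℝ) + 1 := by positivity
  have h := Real.log_le_sub_one_of_pos (show (0:ℝ) < (t : ℝ) / ((t : ℝ) + 1) by positivity)
  rw [Real.log_div (ne_of_gt ht0) (ne_of_gt ht1)] at h
  have e : (t : ℝ) / ((t : ℝ) + 1) - 1 = -(1 / ((t : ℝ) + 1)) := by field_simp; ring
  rw [e] at h
  linarith

lemma log_succ_le (t : ℕ) (ht : 1 ≤ t) :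
    Real.log ((t : ℝ) + 1) - Real.log t ≤ 1 / (t : ℝ) := by
  have ht0 : (0 : ℝ) < (t : ℝ) := by exact_mod_cast ht
  have ht1 : (0 : ℝ) < (t : ℝ) + 1 := by positivity
  have h := Real.log_le_sub_one_of_pos (show (0:ℝ) < ((t : ℝ) + 1) / (t : ℝ) by positivity)
  rw [Real.log_div (ne_of_gt ht1) (ne_of_gt ht0)] at h
  have e : ((t : ℝ) + 1) / (t : ℝ) - 1 = 1 / (t : ℝ) := by field_simp; ring
  linarith [h.trans_eq e]

lemma harm_le_log {j : ℕ} (hj : 1 ≤ j) : ∀ s, j ≤ s →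
    harm s - harm j ≤ Real.log s - Real.log j := by
  intro s
  induction s with
  | zero => intro h; omega
  | succ s ih =>
    intro h
    rcases Nat.lt_or_ge j (s + 1) with h' | h'
    · have hjs : j ≤ s := by omega
      have hs1 : 1 ≤ s := by omega
      have := ih hjs
      have hlog := log_succ_ge s hs1
      rw [harm_succ]
      push_cast
      linarith
    · have : j = s + 1 := by omega
      subst this
      simp

lemma log_le_harm {j : ℕ} (hj : 1 ≤ j) : ∀ s, j ≤ s →
    Real.log s - Real.log j ≤ harm s - harm j + 1 / (j : ℝ) - 1 / (s : ℝ) := by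
  intro s
  induction s with
  | zero => intro h; omega
  | succ s ih =>
    intro h
    rcases Nat.lt_or_ge j (s + 1) with h' | h'
    · have hjs : j ≤ s := by omega
      have hs1 : 1 ≤ s := by omega
      have hs0 : (0 : ℝ) < (s : ℝ) := by exact_mod_cast hs1
      have := ih hjs
      have hlog := log_succ_le s hs1
      rw [harm_succ]
      push_cast
      have e : 1 / (s : ℝ) - 1 / ((s : ℝ) + 1) ≤ 1 / (s:ℝ) - 1/((s:ℝ)+1) := le_refl _
      linarith
    · have : j = s + 1 := by omega
      subst this
      simp

lemma harm_le_one_add_log (s : ℕ) (hs : 1 ≤ s) : harm s ≤ 1 + Real.log s := by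
  have h := harm_le_log (le_refl 1) s hs
  have h1 : harm 1 = 1 := by unfold harm; simp
  simp only [Nat.cast_one, Real.log_one] at h
  linarith

lemma log_div_le {u v : ℝ} (hu : 0 < u) (huv : u ≤ v) :
    Real.log v - Real.log u ≤ (v - u) / u := by
  have hv : 0 < v := lt_of_lt_of_le hu huv
  have h := Real.log_le_sub_one_of_pos (show (0:ℝ) < v / u by positivity)
  rw [Real.log_div (ne_of_gt hv) (ne_of_gt hu)] at h
  have e : v / u - 1 = (v - u) / u := by field_simp
  linarith [h.trans_eq e]

lemma abs_log_sub_le {u v w : ℝ} (hw : 0 < w) (hwu : w ≤ u) (hwv : w ≤ v) :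
    |Real.log v - Real.log u| ≤ |v - u| / w := by
  have hu : 0 < u := lt_of_lt_of_le hw hwu
  have hv : 0 < v := lt_of_lt_of_le hw hwv
  rcases le_total u v with h | h
  · rw [abs_of_nonneg (by linarith [Real.log_le_log hu h] :
      (0:ℝ) ≤ Real.log v - Real.log u), abs_of_nonneg (by linarith : (0:ℝ) ≤ v - u)]
    calc Real.log v - Real.log u ≤ (v - u) / u := log_div_le hu h
      _ ≤ (v - u) / w := by
        apply div_le_div_of_nonneg_left (by linarith) hw hwu
  · rw [abs_of_nonpos (by linarith [Real.log_le_log hv h] :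
      Real.log v - Real.log u ≤ 0), abs_of_nonpos (by linarith : v - u ≤ 0)]
    calc -(Real.log v - Real.log u) = Real.log u - Real.log v := by ring
      _ ≤ (u - v) / v := log_div_le hv h
      _ ≤ (u - v) / w := by apply div_le_div_of_nonneg_left (by linarith) hw hwv
      _ = -(v - u) / w := by ring

lemma per_term (a b c₁ c₂ n i : ℕ) (hi : i ≤ n - c₁) (hn : a + b + 2*c₁ + c₂ + 4 ≤ n) :
    |(((c₂ + i : ℕ) : ℝ) / n) * Real.log (((c₂ + i : ℕ) : ℝ) / n)
      - G (a + 1 + i) (a + b + (n - c₁) + 2)|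
    ≤ 10 * ((a:ℝ) + b + c₁ + c₂ + 4)^2 * (1 + Real.log n) / n := by
  set m := n - c₁ with hmdef
  set j := a + 1 + i with hjdef
  set s := a + b + m + 2 with hsdef
  set Q : ℝ := (a:ℝ) + b + c₁ + c₂ + 4 with hQdef
  have hmn : m + c₁ = n := by omega
  have hjs : j ≤ s := by omega
  have hn1 : 1 ≤ n := by omega
  have Rn : (0:ℝ) < n := by exact_mod_cast Nat.pos_of_ne_zero (by omega)
  have Rs : (0:ℝ) < s := by exact_mod_cast (by omega : 0 < s)
  have Rj1 : (1:ℝ) ≤ (j:ℝ) := by exact_mod_cast (by omega : 1 ≤ j)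
  have Rj : (0:ℝ) < (j:ℝ) := lt_of_lt_of_le one_pos Rj1
  have RQ4 : (4:ℝ) ≤ Q := by
    rw [hQdef]
    have : (0:ℝ) ≤ (a:ℝ) := Nat.cast_nonneg a
    have : (0:ℝ) ≤ (b:ℝ) := Nat.cast_nonneg b
    have : (0:ℝ) ≤ (c₁:ℝ) := Nat.cast_nonneg c₁
    have : (0:ℝ) ≤ (c₂:ℝ) := Nat.cast_nonneg c₂
    linarith
  have RQ : (0:ℝ) < Q := by linarith
  have Rlogn : 0 ≤ Real.log n := Real.log_nonneg (by exact_mod_cast hn1)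
  have Rn2s : (n:ℝ) ≤ 2 * s := by exact_mod_cast (by omega : n ≤ 2 * s)
  have Rs2n : (s:ℝ) ≤ 2 * n := by exact_mod_cast (by omega : s ≤ 2 * n)
  have Rjscast : (j:ℝ) ≤ (s:ℝ) := by exact_mod_cast hjs
  have Rsn : (s:ℝ) - n = (a:ℝ) + b + 2 - c₁ := by
    have : (m:ℝ) = (n:ℝ) - c₁ := by
      have : ((m + c₁ : ℕ):ℝ) = (n:ℝ) := by rw [hmn]
      push_cast at this
      linarith
    rw [hsdef]
    push_cast
    rw [this]
    ring
  have Rabs_sn : |(s:ℝ) - n| ≤ Q := by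
    rw [Rsn, hQdef]
    rw [abs_le]
    constructor
    · have : (0:ℝ) ≤ (a:ℝ) + b := by positivity
      have hc1 : (c₁:ℝ) ≤ n := by exact_mod_cast (by omega : c₁ ≤ n)
      have : (0:ℝ) ≤ (c₂:ℝ) := Nat.cast_nonneg c₂
      have : (0:ℝ) ≤ (c₁:ℝ) := Nat.cast_nonneg c₁
      linarith
    · have : (0:ℝ) ≤ (c₁:ℝ) := Nat.cast_nonneg c₁
      have : (0:ℝ) ≤ (c₂:ℝ) := Nat.cast_nonneg c₂
      linarith
  set y : ℝ := (j:ℝ) / s with hydef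
  have hy0 : 0 ≤ y := by positivity
  have hy1 : y ≤ 1 := by rw [hydef, div_le_one Rs]; exact Rjscast
  have hlog2 : Real.log 2 ≤ 1 := by
    have := Real.log_le_sub_one_of_pos (show (0:ℝ) < 2 by norm_num)
    linarith
  have hlog2n : Real.log ((2:ℝ) * n) ≤ 1 + Real.log n := by
    rw [Real.log_mul (by norm_num) (ne_of_gt Rn)]
    linarith
  have honelog : (1:ℝ) ≤ 1 + Real.log n := by linarith
  clear_value m j s Q y
  rcases Nat.eq_zero_or_pos (c₂ + i) with hk0 | hk1
  · -- k = 0 case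
    have hi0 : i = 0 := by omega
    simp only [hk0, Nat.cast_zero, zero_div, Real.log_zero, mul_zero, zero_sub, abs_neg]
    have hGval : |G j s| = y * (harm s - harm j) := by
      rw [G, ← hydef]
      rw [abs_mul, abs_of_nonneg hy0, abs_sub_comm,
        abs_of_nonneg (by linarith [harm_mono hjs] : (0:ℝ) ≤ harm s - harm j)]
    rw [hGval]
    have h1 : harm s - harm j ≤ 2 * (1 + Real.log n) := by
      have h2 := harm_le_one_add_log s (by omega)
      have h3 := harm_nonneg j
      have h4 : Real.log s ≤ Real.log (2 * n) := by
        apply Real.log_le_log Rs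
        linarith
      linarith
    have hyQ : y ≤ 2 * Q / n := by
      rw [hydef, div_le_div_iff₀ Rs Rn]
      have hjQ : (j:ℝ) ≤ Q := by
        rw [hjdef, hi0, hQdef]
        push_cast
        have : (0:ℝ) ≤ (b:ℝ) := Nat.cast_nonneg b
        have : (0:ℝ) ≤ (c₁:ℝ) := Nat.cast_nonneg c₁
        have : (0:ℝ) ≤ (c₂:ℝ) := Nat.cast_nonneg c₂
        linarith
      linarith [mul_le_mul_of_nonneg_right hjQ Rn.le, mul_le_mul_of_nonneg_left Rn2s RQ.le]
    have hfac : (0:ℝ) ≤ (n:ℝ) * (1 + Real.log n) * (10*Q^2 - 4*Q) := by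
      apply mul_nonneg (mul_nonneg Rn.le (by linarith))
      linarith [mul_nonneg (by linarith : (0:ℝ) ≤ Q - 4) RQ.le, sq_nonneg Q]
    calc y * (harm s - harm j) ≤ (2 * Q / n) * (2 * (1 + Real.log n)) := by
          apply mul_le_mul hyQ h1 (by linarith [harm_mono hjs]) (by positivity)
      _ ≤ 10 * Q^2 * (1 + Real.log n) / n := by
          rw [div_mul_eq_mul_div, div_le_div_iff₀ Rn Rn]
          linarith [hfac]
  · -- k ≥ 1 case
    have Rk1 : (1:ℝ) ≤ ((c₂ + i : ℕ):ℝ) := by exact_mod_cast hk1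
    set k := c₂ + i with hkdef
    clear_value k
    have Rk : (0:ℝ) < (k:ℝ) := by linarith
    have Rk2n : (k:ℝ) ≤ 2 * n := by exact_mod_cast (by omega : k ≤ 2 * n)
    have Rin : (i:ℝ) ≤ (n:ℝ) := by exact_mod_cast (by omega : i ≤ n)
    set x : ℝ := (k:ℝ) / n with hxdef
    clear_value x
    have hlogx : Real.log x = Real.log k - Real.log n := by
      rw [hxdef, Real.log_div (ne_of_gt Rk) (ne_of_gt Rn)]
    set r : ℝ := (harm j - harm s) - (Real.log j - Real.log s) with hrdef
    clear_value r
    have hrabs : |r| ≤ 1 / (j:ℝ) := by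
      have h1 := harm_le_log (by omega : 1 ≤ j) s hjs
      have h2 := log_le_harm (by omega : 1 ≤ j) s hjs
      have hspos : (0:ℝ) < 1 / (s:ℝ) := by positivity
      have hjpos : (0:ℝ) < 1 / (j:ℝ) := by positivity
      rw [hrdef, abs_le]
      constructor
      · linarith
      · linarith
    have hdecomp : x * Real.log x - G j s
        = (x - y) * (Real.log k - Real.log n) + y * (Real.log k - Real.log j)
          + y * (Real.log s - Real.log n) - y * r := by
      rw [G, ← hydef, hlogx, hrdef]
      ring
    have htri : |x * Real.log x - G j s|
        ≤ |x - y| * |Real.log k - Real.log n| + y * |Real.log k - Real.log j|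
          + y * |Real.log s - Real.log n| + y * |r| := by
      rw [hdecomp]
      calc |(x - y) * (Real.log k - Real.log n) + y * (Real.log k - Real.log j)
            + y * (Real.log s - Real.log n) - y * r|
          ≤ |(x - y) * (Real.log k - Real.log n) + y * (Real.log k - Real.log j)
            + y * (Real.log s - Real.log n)| + |y * r| := abs_sub _ _
        _ ≤ |(x - y) * (Real.log k - Real.log n) + y * (Real.log k - Real.log j)|
            + |y * (Real.log s - Real.log n)| + |y * r| := by
            have := abs_add_le ((x - y) * (Real.log k - Real.log n)
              + y * (Real.log k - Real.log j)) (y * (Real.log s - Real.log n))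
            linarith
        _ ≤ |(x - y) * (Real.log k - Real.log n)| + |y * (Real.log k - Real.log j)|
            + |y * (Real.log s - Real.log n)| + |y * r| := by
            have := abs_add_le ((x - y) * (Real.log k - Real.log n))
              (y * (Real.log k - Real.log j))
            linarith
        _ = |x - y| * |Real.log k - Real.log n| + y * |Real.log k - Real.log j|
            + y * |Real.log s - Real.log n| + y * |r| := by
            rw [abs_mul, abs_mul, abs_mul, abs_mul, abs_of_nonneg hy0]
    have hc2Q : (c₂:ℝ) ≤ Q := by
      rw [hQdef]
      have h1 : (0:ℝ) ≤ (a:ℝ) := Nat.cast_nonneg a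
      have h2 : (0:ℝ) ≤ (b:ℝ) := Nat.cast_nonneg b
      have h3 : (0:ℝ) ≤ (c₁:ℝ) := Nat.cast_nonneg c₁
      linarith
    have ha1Q : (a:ℝ) + 1 ≤ Q := by
      rw [hQdef]
      have h2 : (0:ℝ) ≤ (b:ℝ) := Nat.cast_nonneg b
      have h3 : (0:ℝ) ≤ (c₁:ℝ) := Nat.cast_nonneg c₁
      have h4 : (0:ℝ) ≤ (c₂:ℝ) := Nat.cast_nonneg c₂
      linarith
    -- (B1)
    have hB1 : |x - y| ≤ 5 * Q / n := by
      have hxy : x - y = ((c₂:ℝ)/n - ((a:ℝ)+1)/s) + (i:ℝ)*((s:ℝ)-(n:ℝ))/((n:ℝ)*(s:ℝ)) := by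
        rw [hxdef, hydef, hkdef, hjdef]
        push_cast
        field_simp
        ring
      have h1 : |(c₂:ℝ)/n| ≤ Q / n := by
        rw [abs_of_nonneg (by positivity)]
        gcongr
      have h2 : |((a:ℝ)+1)/s| ≤ 2 * Q / n := by
        rw [abs_of_nonneg (by positivity), div_le_div_iff₀ Rs Rn]
        linarith [mul_le_mul_of_nonneg_right ha1Q Rn.le, mul_le_mul_of_nonneg_left Rn2s RQ.le]
      have h3 : |(i:ℝ)*((s:ℝ)-(n:ℝ))/((n:ℝ)*(s:ℝ))| ≤ 2 * Q / n := by
        rw [abs_div, abs_mul, abs_of_nonneg (Nat.cast_nonneg i),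
          abs_of_nonneg (by positivity : (0:ℝ) ≤ (n:ℝ)*(s:ℝ)),
          div_le_div_iff₀ (by positivity) Rn]
        have e1 : (i:ℝ) * |(s:ℝ) - n| ≤ (n:ℝ) * Q :=
          mul_le_mul Rin Rabs_sn (abs_nonneg _) Rn.le
        linarith [abs_nonneg ((s:ℝ) - n), mul_le_mul_of_nonneg_right e1 Rn.le,
          mul_le_mul_of_nonneg_left Rn2s (mul_nonneg RQ.le Rn.le)]
      calc |x - y| ≤ |(c₂:ℝ)/n - ((a:ℝ)+1)/s| + |(i:ℝ)*((s:ℝ)-(n:ℝ))/((n:ℝ)*(s:ℝ))| := by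
            rw [hxy]; exact abs_add_le _ _
        _ ≤ (|(c₂:ℝ)/n| + |((a:ℝ)+1)/s|) + |(i:ℝ)*((s:ℝ)-(n:ℝ))/((n:ℝ)*(s:ℝ))| := by
            have h := abs_sub ((c₂:ℝ)/n) (((a:ℝ)+1)/s)
            linarith
        _ ≤ 5 * Q / n := by
            have he : Q/(n:ℝ) + 2*Q/n + 2*Q/n = 5*Q/n := by ring
            linarith
    -- (B2)
    have hB2 : |Real.log k - Real.log n| ≤ 1 + Real.log n := by
      rw [abs_le]
      constructor
      · have := Real.log_nonneg Rk1
        linarith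
      · have h4 : Real.log k ≤ Real.log (2 * n) := Real.log_le_log Rk Rk2n
        linarith
    -- (B3)
    set w : ℝ := max 1 (i:ℝ) with hwdef
    clear_value w
    have hw1 : (1:ℝ) ≤ w := by rw [hwdef]; exact le_max_left _ _
    have hw : (0:ℝ) < w := lt_of_lt_of_le one_pos hw1
    have hwk : w ≤ (k:ℝ) := by
      rw [hwdef]
      apply max_le Rk1
      exact_mod_cast (by omega : i ≤ k)
    have hwj : w ≤ (j:ℝ) := by
      rw [hwdef]
      apply max_le Rj1
      exact_mod_cast (by omega : i ≤ j)
    have hjw : (j:ℝ) ≤ Q * w := by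
      rcases Nat.eq_zero_or_pos i with hi0 | hi1
      · have hj : (j:ℝ) = (a:ℝ) + 1 := by rw [hjdef, hi0]; push_cast; ring
        have hq : Q * 1 ≤ Q * w := mul_le_mul_of_nonneg_left hw1 RQ.le
        rw [hj]
        linarith
      · have Ri1 : (1:ℝ) ≤ (i:ℝ) := by exact_mod_cast hi1
        have hwi : (i:ℝ) ≤ w := by rw [hwdef]; exact le_max_right _ _
        have hj : (j:ℝ) = (a:ℝ) + 1 + i := by rw [hjdef]; push_cast; ring
        have haQ : (a:ℝ) + 4 ≤ Q := by
          rw [hQdef]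
          have h2 : (0:ℝ) ≤ (b:ℝ) := Nat.cast_nonneg b
          have h3 : (0:ℝ) ≤ (c₁:ℝ) := Nat.cast_nonneg c₁
          have h4 : (0:ℝ) ≤ (c₂:ℝ) := Nat.cast_nonneg c₂
          linarith
        have hca : (0:ℝ) ≤ (a:ℝ) := Nat.cast_nonneg a
        have t1 : Q * (i:ℝ) ≤ Q * w := mul_le_mul_of_nonneg_left hwi RQ.le
        have t2 : ((a:ℝ) + 4) * i ≤ Q * i :=
          mul_le_mul_of_nonneg_right haQ (by linarith : (0:ℝ) ≤ (i:ℝ))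
        have t3 : (a:ℝ) * 1 ≤ (a:ℝ) * i := mul_le_mul_of_nonneg_left Ri1 hca
        rw [hj]
        linarith [t1, t2, t3, Ri1]
    have hkj : |(k:ℝ) - (j:ℝ)| ≤ Q := by
      have e : (k:ℝ) - (j:ℝ) = (c₂:ℝ) - ((a:ℝ) + 1) := by
        rw [hkdef, hjdef]; push_cast; ring
      rw [e, abs_le]
      constructor
      · have h4 : (0:ℝ) ≤ (c₂:ℝ) := Nat.cast_nonneg c₂
        linarith
      · have hca : (0:ℝ) ≤ (a:ℝ) := Nat.cast_nonneg a
        linarith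
    have hlogkj : |Real.log k - Real.log j| ≤ Q / w := by
      calc |Real.log k - Real.log j| ≤ |(k:ℝ) - (j:ℝ)| / w := abs_log_sub_le hw hwj hwk
        _ ≤ Q / w := by gcongr
    have hB3 : y * |Real.log k - Real.log j| ≤ 2 * Q^2 / n := by
      have hyb : y ≤ Q * w / s := by
        rw [hydef]
        gcongr
      have hmul : y * |Real.log k - Real.log j| ≤ (Q * w / s) * (Q / w) :=
        mul_le_mul hyb hlogkj (abs_nonneg _) (by positivity)
      have heq : (Q * w / s) * (Q / w) = Q * Q / s := by
        field_simp
      have hfin : Q * Q / s ≤ 2 * Q^2 / n := by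
        rw [div_le_div_iff₀ Rs Rn]
        linarith [mul_le_mul_of_nonneg_left Rn2s (mul_nonneg RQ.le RQ.le)]
      linarith [hmul.trans_eq heq]
    -- (B4)
    have hB4 : y * |Real.log s - Real.log n| ≤ 2 * Q / n := by
      have h := abs_log_sub_le (show (0:ℝ) < (n:ℝ)/2 by positivity)
        (show (n:ℝ)/2 ≤ (n:ℝ) by linarith) (show (n:ℝ)/2 ≤ (s:ℝ) by linarith)
      have heq : Q / ((n:ℝ)/2) = 2 * Q / n := by
        field_simp
      have h2 : |Real.log s - Real.log n| ≤ 2 * Q / n := by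
        calc |Real.log s - Real.log n| ≤ |(s:ℝ) - (n:ℝ)| / ((n:ℝ)/2) := h
          _ ≤ Q / ((n:ℝ)/2) := by gcongr
          _ = 2 * Q / n := heq
      calc y * |Real.log s - Real.log n| ≤ 1 * (2 * Q / n) :=
            mul_le_mul hy1 h2 (abs_nonneg _) zero_le_one
        _ = 2 * Q / n := one_mul _
    -- (B5)
    have hB5 : y * |r| ≤ 2 / n := by
      have h1 : y * |r| ≤ y * (1 / (j:ℝ)) := mul_le_mul_of_nonneg_left hrabs hy0
      have h2 : y * (1 / (j:ℝ)) = 1 / (s:ℝ) := by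
        rw [hydef]
        field_simp
      have h3 : 1 / (s:ℝ) ≤ 2 / n := by
        rw [div_le_div_iff₀ Rs Rn]
        linarith
      linarith [h1.trans_eq h2]
    -- combine
    have hB12 : |x - y| * |Real.log k - Real.log n| ≤ 5 * Q * (1 + Real.log n) / n := by
      calc |x - y| * |Real.log k - Real.log n| ≤ (5 * Q / n) * (1 + Real.log n) :=
            mul_le_mul hB1 hB2 (abs_nonneg _) (by positivity)
        _ = 5 * Q * (1 + Real.log n) / n := by ring
    have hfinal : 5 * Q * (1 + Real.log n) / n + 2 * Q^2 / n + 2 * Q / n + 2 / n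
        ≤ 10 * Q^2 * (1 + Real.log n) / n := by
      rw [← add_div, ← add_div, ← add_div, div_le_div_iff₀ Rn Rn]
      have hq1 : (0:ℝ) ≤ (Q - 4) * Q := mul_nonneg (by linarith) RQ.le
      have hq2 : (0:ℝ) ≤ Real.log n * (10 * Q^2 - 5 * Q) := by
        apply mul_nonneg Rlogn
        linarith [mul_nonneg (by linarith : (0:ℝ) ≤ Q - 4) RQ.le, sq_nonneg Q]
      have hAB : 5 * Q * (1 + Real.log n) + 2 * Q^2 + 2 * Q + 2
          ≤ 10 * Q^2 * (1 + Real.log n) := by linarith [hq1, hq2]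
      linarith [mul_le_mul_of_nonneg_right hAB Rn.le]
    calc |x * Real.log x - G j s|
        ≤ |x - y| * |Real.log k - Real.log n| + y * |Real.log k - Real.log j|
          + y * |Real.log s - Real.log n| + y * |r| := htri
      _ ≤ 5 * Q * (1 + Real.log n) / n + 2 * Q^2 / n + 2 * Q / n + 2 / n := by linarith
      _ ≤ 10 * Q^2 * (1 + Real.log n) / n := hfinal

/-- **Lemma (E-Jn-ln-Jn).** For `J = c₂ + I`, `I ~ BetaBin(n−c₁, α, β)` with integers
`α, β ≥ 1` and any fixed `h ∈ (0,1)`,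
`E[(J/n)·ln(J/n)] = (α/(α+β))·(H_α − H_{α+β}) ± O(n^{−h})`
(with the convention `0·ln 0 = 0`, which holds since `Real.log 0 = 0`). -/
theorem E_Jn_ln_Jn (c₁ c₂ α β : ℕ) (hα : 1 ≤ α) (hβ : 1 ≤ β)
    (h : ℝ) (h0 : 0 < h) (h1 : h < 1) :
    ∃ C : ℝ, ∃ N : ℕ, ∀ n ≥ N,
      |(∑ i ∈ Finset.range (n - c₁ + 1),
          betaBinPMF (n - c₁) (α : ℝ) (β : ℝ) i *
            ((((c₂ + i : ℕ) : ℝ) / n) * Real.log (((c₂ + i : ℕ) : ℝ) / n)))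
        - ((α : ℝ) / ((α : ℝ) + (β : ℝ))) * (harm α - harm (α + β))|
      ≤ C * (n : ℝ) ^ (-h) := by
  obtain ⟨a, rfl⟩ : ∃ a, α = a + 1 := ⟨α - 1, by omega⟩
  obtain ⟨b, rfl⟩ : ∃ b, β = b + 1 := ⟨β - 1, by omega⟩
  set Q : ℝ := (a:ℝ) + b + c₁ + c₂ + 4 with hQdef
  have RQ : (0:ℝ) < Q := by
    rw [hQdef]
    have h1 : (0:ℝ) ≤ (a:ℝ) := Nat.cast_nonneg a
    have h2 : (0:ℝ) ≤ (b:ℝ) := Nat.cast_nonneg b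
    have h3 : (0:ℝ) ≤ (c₁:ℝ) := Nat.cast_nonneg c₁
    have h4 : (0:ℝ) ≤ (c₂:ℝ) := Nat.cast_nonneg c₂
    linarith
  have h1h : (0:ℝ) < 1 - h := by linarith
  have hCpos : (0:ℝ) ≤ 10 * Q^2 * (1 + 1/(1-h)) := by positivity
  refine ⟨10 * Q^2 * (1 + 1/(1-h)), a + b + 2*c₁ + c₂ + 4, fun n hn => ?_⟩
  set m := n - c₁ with hm
  have hn1 : 1 ≤ n := by omega
  have Rn : (0:ℝ) < n := by exact_mod_cast Nat.pos_of_ne_zero (by omega)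
  have Rn1 : (1:ℝ) ≤ n := by exact_mod_cast hn1
  have Rlogn : 0 ≤ Real.log n := Real.log_nonneg Rn1
  have hL : (((a+1:ℕ):ℝ) / (((a+1:ℕ):ℝ) + ((b+1:ℕ):ℝ))) * (harm (a+1) - harm ((a+1) + (b+1)))
      = G (a + 1) (a + b + 2) := by
    have e : (a+1) + (b+1) = a + b + 2 := by omega
    rw [e]
    unfold G
    push_cast
    ring
  have hstep1 : (∑ i ∈ Finset.range (m + 1),
        betaBinPMF m ((a+1:ℕ):ℝ) ((b+1:ℕ):ℝ) i *
          ((((c₂ + i : ℕ) : ℝ) / n) * Real.log (((c₂ + i : ℕ) : ℝ) / n)))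
      - (((a+1:ℕ):ℝ) / (((a+1:ℕ):ℝ) + ((b+1:ℕ):ℝ))) * (harm (a+1) - harm ((a+1) + (b+1)))
      = ∑ i ∈ Finset.range (m + 1), P m a b i *
          (((((c₂ + i : ℕ) : ℝ) / n) * Real.log (((c₂ + i : ℕ) : ℝ) / n))
            - G (a + 1 + i) (a + b + m + 2)) := by
    rw [hL, ← key a b m, ← Finset.sum_sub_distrib]
    apply Finset.sum_congr rfl
    intro i hi
    have hi' : i ≤ m := by simpa [Nat.lt_succ_iff] using hi
    rw [pmf_eq m a b i hi', mul_sub]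
  rw [hstep1]
  have hbound : |∑ i ∈ Finset.range (m + 1), P m a b i *
        (((((c₂ + i : ℕ) : ℝ) / n) * Real.log (((c₂ + i : ℕ) : ℝ) / n))
          - G (a + 1 + i) (a + b + m + 2))|
      ≤ 10 * Q^2 * (1 + Real.log n) / n := by
    calc |∑ i ∈ Finset.range (m + 1), P m a b i *
          (((((c₂ + i : ℕ) : ℝ) / n) * Real.log (((c₂ + i : ℕ) : ℝ) / n))
            - G (a + 1 + i) (a + b + m + 2))|
        ≤ ∑ i ∈ Finset.range (m + 1), |P m a b i *
          (((((c₂ + i : ℕ) : ℝ) / n) * Real.log (((c₂ + i : ℕ) : ℝ) / n))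
            - G (a + 1 + i) (a + b + m + 2))| := Finset.abs_sum_le_sum_abs _ _
      _ ≤ ∑ i ∈ Finset.range (m + 1), P m a b i * (10 * Q^2 * (1 + Real.log n) / n) := by
          apply Finset.sum_le_sum
          intro i hi
          have hi' : i ≤ m := by simpa [Nat.lt_succ_iff] using hi
          rw [abs_mul, abs_of_nonneg (P_nonneg m a b i)]
          apply mul_le_mul_of_nonneg_left _ (P_nonneg m a b i)
          have := per_term a b c₁ c₂ n i (by omega) (by omega)
          rw [hQdef]
          convert this using 4 <;> omega
      _ = 10 * Q^2 * (1 + Real.log n) / n := by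
          rw [← Finset.sum_mul, sum_P a b m, one_mul]
  have hfin : 10 * Q^2 * (1 + Real.log n) / n
      ≤ (10 * Q^2 * (1 + 1/(1-h))) * (n:ℝ) ^ (-h) := by
    have hr1 : (1:ℝ) ≤ (n:ℝ) ^ (1-h) := by
      calc (1:ℝ) = (n:ℝ) ^ (0:ℝ) := (Real.rpow_zero _).symm
        _ ≤ (n:ℝ) ^ (1-h) := Real.rpow_le_rpow_of_exponent_le Rn1 (by linarith)
    have hr2 : Real.log n ≤ (n:ℝ) ^ (1-h) / (1-h) := by
      have hlog : Real.log ((n:ℝ) ^ (1-h)) = (1-h) * Real.log n := Real.log_rpow Rn _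
      have hle : Real.log ((n:ℝ) ^ (1-h)) ≤ (n:ℝ) ^ (1-h) - 1 :=
        Real.log_le_sub_one_of_pos (Real.rpow_pos_of_pos Rn _)
      rw [le_div_iff₀ h1h]
      rw [hlog] at hle
      linarith
    have hh : 1 + Real.log n ≤ (1 + 1/(1-h)) * (n:ℝ) ^ (1-h) := by
      have e : (1 + 1/(1-h)) * (n:ℝ) ^ (1-h)
          = (n:ℝ) ^ (1-h) + (n:ℝ) ^ (1-h) / (1-h) := by ring
      rw [e]
      linarith
    have hdiv : (n:ℝ) ^ (1-h) / n = (n:ℝ) ^ (-h) := by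
      have e1 : (n:ℝ) ^ (1-h) = (n:ℝ) ^ (-h) * (n:ℝ) := by
        have := Real.rpow_add Rn (-h) 1
        rw [Real.rpow_one] at this
        rw [show (1:ℝ) - h = -h + 1 by ring, this]
      rw [e1, mul_div_assoc, div_self (ne_of_gt Rn), mul_one]
    calc 10 * Q^2 * (1 + Real.log n) / n
        ≤ 10 * Q^2 * ((1 + 1/(1-h)) * (n:ℝ) ^ (1-h)) / n := by gcongr
      _ = (10 * Q^2 * (1 + 1/(1-h))) * ((n:ℝ) ^ (1-h) / n) := by ring
      _ = (10 * Q^2 * (1 + 1/(1-h))) * (n:ℝ) ^ (-h) := by rw [hdiv]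
  exact hbound.trans hfin
end

section
/- Fix an integer t ≥ 0 and k = 2t+1. For n > k and 0 ≤ j ≤ n−1 let w_{n,j} = p_n(j)·(A_1(j) + A_2(j)) with buffer parameter α = 1/2 (so T = 2(n−1)/3), and let the shape function be w(z) = 2·[1/3 < z < 1/2 or 2/3 < z ≤ 1]·z^t·(1−z)^t / B(t+1, t+1) for z ∈ [0,1]. Then Σ_{j=0}^{n−1} |w_{n,j} − ∫_{j/n}^{(j+1)/n} w(z) dz| = O(n^{−1}) as n → ∞. -/
open scoped Classical

/-- `p_n(j) = P(t + I = j)` for `I ~ BetaBin(n-k, t+1, t+1)`, `k = 2t+1`. -/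
noncomputable def pnn (t n j : ℕ) : ℝ :=
  if t ≤ j then betaBinPMF (n - (2 * t + 1)) ((t : ℝ) + 1) ((t : ℝ) + 1) (j - t) else 0

/-- The indicator `A₁(j)` (with `j' = (n-1)-j` and `T = (n-1)/(1+α)`):
`[j ≤ T ∧ j' ≤ T ∧ j ≤ j'] + [j > T]`. -/
noncomputable def indA1 (α : ℝ) (n j : ℕ) : ℝ :=
  (if (j : ℝ) ≤ ((n : ℝ) - 1) / (1 + α) ∧ ((n : ℝ) - 1 - j) ≤ ((n : ℝ) - 1) / (1 + α)
      ∧ (j : ℝ) ≤ (n : ℝ) - 1 - j then 1 else 0)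
  + (if ((n : ℝ) - 1) / (1 + α) < (j : ℝ) then 1 else 0)

/-- The indicator `A₂(j)` (with `j' = (n-1)-j` and `T = (n-1)/(1+α)`):
`[j ≤ T ∧ j' ≤ T ∧ j < j'] + [j > T]`. -/
noncomputable def indA2 (α : ℝ) (n j : ℕ) : ℝ :=
  (if (j : ℝ) ≤ ((n : ℝ) - 1) / (1 + α) ∧ ((n : ℝ) - 1 - j) ≤ ((n : ℝ) - 1) / (1 + α)
      ∧ (j : ℝ) < (n : ℝ) - 1 - j then 1 else 0)
  + (if ((n : ℝ) - 1) / (1 + α) < (j : ℝ) then 1 else 0)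

/-! ### Auxiliary lemmas -/


section Aux

lemma nat_fact_prod (p : ℕ) :
    ∀ q : ℕ, p.factorial * ∏ j ∈ Finset.range q, (p + 1 + j) = (p + q).factorial
  | 0 => by simp
  | q + 1 => by
      rw [Finset.prod_range_succ, ← mul_assoc, nat_fact_prod p q, ← Nat.add_assoc,
        Nat.factorial_succ, mul_comm]
      congr 1
      omega

lemma integral_pow_mul_pow (p q : ℕ) :
    (∫ x in (0:ℝ)..1, x ^ p * (1 - x) ^ q)
      = (p.factorial : ℝ) * q.factorial / (p + q + 1).factorial := by
  have h := Complex.betaIntegral_eval_nat_add_one_right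
    (u := (p : ℂ) + 1) (by simp; positivity) q
  rw [Complex.betaIntegral] at h
  have h2 : (∫ x in (0:ℝ)..1, (x:ℂ) ^ ((p:ℂ) + 1 - 1) * (1 - (x:ℂ)) ^ ((q:ℂ) + 1 - 1))
      = ((∫ x in (0:ℝ)..1, x ^ p * (1 - x) ^ q : ℝ) : ℂ) := by
    rw [← intervalIntegral.integral_ofReal]
    refine intervalIntegral.integral_congr fun x _ => ?_
    push_cast
    rw [add_sub_cancel_right, add_sub_cancel_right, Complex.cpow_natCast, Complex.cpow_natCast]
  have h3 : (∏ j ∈ Finset.range (q + 1), ((p:ℂ) + 1 + j))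
      = ((p + q + 1).factorial : ℂ) / (p.factorial : ℂ) := by
    have h4 : ((p.factorial * ∏ j ∈ Finset.range (q+1), (p + 1 + j) : ℕ) : ℂ)
        = (((p + q + 1).factorial : ℕ) : ℂ) := by
      rw [nat_fact_prod p (q+1)]; norm_num [← Nat.add_assoc]
    push_cast at h4
    rw [eq_div_iff (by exact_mod_cast Nat.factorial_pos p |>.ne')]
    linear_combination h4
  rw [h2, h3] at h
  have hp : ((p.factorial : ℂ)) ≠ 0 := by exact_mod_cast Nat.factorial_pos p |>.ne'
  have hf : (((p+q+1).factorial : ℂ)) ≠ 0 := by exact_mod_cast Nat.factorial_pos _ |>.ne'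
  field_simp at h
  have h5 : (∫ x in (0:ℝ)..1, x ^ p * (1 - x) ^ q) * ((p + q + 1).factorial : ℝ)
      = (q.factorial : ℝ) * p.factorial := by exact_mod_cast h
  have hfp : (0:ℝ) < ((p + q + 1).factorial : ℝ) := by exact_mod_cast Nat.factorial_pos _
  rw [eq_div_iff hfp.ne']
  linarith [h5]

lemma betaFun_nat_s7 (p q : ℕ) :
    betaFun ((p:ℝ) + 1) ((q:ℝ) + 1)
      = (p.factorial : ℝ) * q.factorial / (p + q + 1).factorial := by
  rw [betaFun, ← integral_pow_mul_pow p q]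
  refine intervalIntegral.integral_congr fun x _ => ?_
  rw [add_sub_cancel_right, add_sub_cancel_right, Real.rpow_natCast, Real.rpow_natCast]

lemma betaFun_pos (p q : ℕ) : 0 < betaFun ((p:ℝ) + 1) ((q:ℝ) + 1) := by
  rw [betaFun_nat_s7]
  have h1 : (0:ℝ) < p.factorial := by exact_mod_cast Nat.factorial_pos p
  have h2 : (0:ℝ) < q.factorial := by exact_mod_cast Nat.factorial_pos q
  have h3 : (0:ℝ) < (p+q+1).factorial := by exact_mod_cast Nat.factorial_pos _
  positivity

lemma abs_prod_le_pow (L : ℕ) (x : ℕ → ℝ) (M : ℝ)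
    (hx : ∀ r < L, |x r| ≤ M) : |∏ r ∈ Finset.range L, x r| ≤ M ^ L := by
  rw [Finset.abs_prod]
  calc ∏ r ∈ Finset.range L, |x r| ≤ ∏ r ∈ Finset.range L, M :=
        Finset.prod_le_prod (fun i _ => abs_nonneg _)
          (fun i hi => hx i (Finset.mem_range.mp hi))
    _ = M ^ L := by rw [Finset.prod_const, Finset.card_range]

lemma prod_diff_le (x y : ℕ → ℝ) (M d : ℝ) (hM : 0 ≤ M) (hd : 0 ≤ d) :
    ∀ L : ℕ, (∀ r < L, |x r| ≤ M) → (∀ r < L, |y r| ≤ M) → (∀ r < L, |x r - y r| ≤ d) →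
    |∏ r ∈ Finset.range L, x r - ∏ r ∈ Finset.range L, y r| ≤ L * d * M ^ (L - 1)
  | 0, _, _, _ => by simp
  | L + 1, hx, hy, hdd => by
    have ih := prod_diff_le x y M d hM hd L (fun r hr => hx r (hr.trans (Nat.lt_succ_self L)))
      (fun r hr => hy r (hr.trans (Nat.lt_succ_self L)))
      (fun r hr => hdd r (hr.trans (Nat.lt_succ_self L)))
    rw [Finset.prod_range_succ, Finset.prod_range_succ]
    have hA : |∏ r ∈ Finset.range L, x r| ≤ M ^ L :=
      abs_prod_le_pow L x M (fun r hr => hx r (hr.trans (Nat.lt_succ_self L)))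
    have key : |(∏ r ∈ Finset.range L, x r) * x L - (∏ r ∈ Finset.range L, y r) * y L|
        ≤ |∏ r ∈ Finset.range L, x r| * |x L - y L|
          + |∏ r ∈ Finset.range L, x r - ∏ r ∈ Finset.range L, y r| * |y L| := by
      calc |(∏ r ∈ Finset.range L, x r) * x L - (∏ r ∈ Finset.range L, y r) * y L|
          = |(∏ r ∈ Finset.range L, x r) * (x L - y L)
            + (∏ r ∈ Finset.range L, x r - ∏ r ∈ Finset.range L, y r) * y L| := by ring_nf
        _ ≤ _ := by
            refine (abs_add_le _ _).trans (le_of_eq ?_)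
            rw [abs_mul, abs_mul]
    have hyL : |y L| ≤ M := hy L (Nat.lt_succ_self L)
    have hdL : |x L - y L| ≤ d := hdd L (Nat.lt_succ_self L)
    have step2 : |∏ r ∈ Finset.range L, x r - ∏ r ∈ Finset.range L, y r| * |y L|
        ≤ (L * d * M ^ (L-1)) * M :=
      mul_le_mul ih hyL (abs_nonneg _) (by positivity)
    have step3 : (L * d * M ^ (L-1)) * M ≤ L * d * M ^ L := by
      rcases Nat.eq_zero_or_pos L with h0 | h0
      · subst h0; simp
      · rw [mul_assoc, ← pow_succ, Nat.sub_add_cancel h0]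
    have step1 : |∏ r ∈ Finset.range L, x r| * |x L - y L| ≤ M ^ L * d :=
      mul_le_mul hA hdL (abs_nonneg _) (by positivity)
    have htot : |(∏ r ∈ Finset.range L, x r) * x L - (∏ r ∈ Finset.range L, y r) * y L|
        ≤ M ^ L * d + L * d * M ^ L := by linarith
    refine htot.trans (le_of_eq ?_)
    simp only [Nat.add_sub_cancel]
    push_cast
    ring

lemma interior_est (t n j : ℕ) (hn : 4*t + 4 ≤ n) (hj1 : t ≤ j) (hj2 : j + t + 1 ≤ n) :
    |(∏ r ∈ Finset.range t, ((j:ℝ) - r)) * (∏ r ∈ Finset.range t, ((n:ℝ) - 1 - j - r))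
        / (∏ r ∈ Finset.range (2*t+1), ((n:ℝ) - r))
      - (j:ℝ)^t * ((n:ℝ) - j)^t / (n:ℝ)^(2*t+1)|
    ≤ 2^(2*t+1) * (2*(t:ℝ)^2 + (2*(t:ℝ)+1)^2) / (n:ℝ)^2 := by
  have hn0 : 0 < n := by omega
  have hN : (0:ℝ) < n := by exact_mod_cast hn0
  have hjn : (j:ℝ) ≤ n := by exact_mod_cast (by omega : j ≤ n)
  have htj : (t:ℝ) ≤ j := by exact_mod_cast hj1
  have hjt : (j:ℝ) + t + 1 ≤ n := by exact_mod_cast hj2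
  have htn : 4*(t:ℝ) + 4 ≤ n := by
    have := (Nat.cast_le (α := ℝ)).mpr hn; push_cast at this; linarith
  set N := (n:ℝ) with hNdef
  set X := (j:ℝ) with hXdef
  have hxU : ∀ r < t, |X - (r:ℝ)| ≤ N := fun r hr => by
    have : (r:ℝ) < t := by exact_mod_cast hr
    rw [abs_le]; constructor <;> linarith
  have hyU : ∀ r < t, |X| ≤ N := fun r hr => by rw [abs_le]; constructor <;> linarith
  have hdU : ∀ r < t, |(X - (r:ℝ)) - X| ≤ (t:ℝ) := fun r hr => by
    have : (r:ℝ) < t := by exact_mod_cast hr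
    rw [abs_le]; constructor <;> linarith
  have hxV : ∀ r < t, |N - 1 - X - (r:ℝ)| ≤ N := fun r hr => by
    have h1 : (r:ℝ) < t := by exact_mod_cast hr
    rw [abs_le]; constructor <;> linarith
  have hyV : ∀ r < t, |N - X| ≤ N := fun r hr => by rw [abs_le]; constructor <;> linarith
  have hdV : ∀ r < t, |(N - 1 - X - (r:ℝ)) - (N - X)| ≤ (t:ℝ) := fun r hr => by
    have : (r:ℝ) + 1 ≤ t := by exact_mod_cast (by omega : r + 1 ≤ t)
    rw [abs_le]; constructor <;> linarith
  have hxW : ∀ r < 2*t+1, |N - (r:ℝ)| ≤ N := fun r hr => by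
    have : (r:ℝ) < 2*(t:ℝ)+1 := by exact_mod_cast hr
    rw [abs_le]; constructor <;> linarith
  have hyW : ∀ r < 2*t+1, |N| ≤ N := fun r hr => by rw [abs_le]; constructor <;> linarith
  have hdW : ∀ r < 2*t+1, |N - (r:ℝ) - N| ≤ 2*(t:ℝ)+1 := fun r hr => by
    have : (r:ℝ) < 2*(t:ℝ)+1 := by exact_mod_cast hr
    rw [abs_le]; constructor <;> linarith
  set U := ∏ r ∈ Finset.range t, (X - (r:ℝ)) with hU
  set V := ∏ r ∈ Finset.range t, (N - 1 - X - (r:ℝ)) with hV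
  set W := ∏ r ∈ Finset.range (2*t+1), (N - (r:ℝ)) with hW
  have hUe : |U - X^t| ≤ t * t * N^(t-1) := by
    have := prod_diff_le (fun r => X - (r:ℝ)) (fun _ => X) N t hN.le (by positivity) t
      hxU hyU hdU
    simpa [Finset.prod_const, Finset.card_range] using this
  have hVe : |V - (N - X)^t| ≤ t * t * N^(t-1) := by
    have := prod_diff_le (fun r => N - 1 - X - (r:ℝ)) (fun _ => N - X) N t hN.le
      (by positivity) t hxV hyV hdV
    simpa [Finset.prod_const, Finset.card_range] using this
  have hWe : |N^(2*t+1) - W| ≤ (2*(t:ℝ)+1) * (2*(t:ℝ)+1) * N^(2*t) := by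
    have := prod_diff_le (fun _ => N) (fun r => N - (r:ℝ)) N (2*(t:ℝ)+1) hN.le
      (by positivity) (2*t+1) hyW hxW (fun r hr => by
        have := hdW r hr; rw [abs_sub_comm]; simpa using this)
    have h2 : ((2*t+1 : ℕ) : ℝ) = 2*(t:ℝ)+1 := by push_cast; ring
    simpa [Finset.prod_const, Finset.card_range, h2] using this
  have hWlow : (N/2)^(2*t+1) ≤ W := by
    rw [hW]
    calc (N/2)^(2*t+1) = ∏ _r ∈ Finset.range (2*t+1), (N/2) := by
          rw [Finset.prod_const, Finset.card_range]
      _ ≤ _ := Finset.prod_le_prod (fun i _ => by positivity) (fun i hi => by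
          have : (i:ℝ) < 2*(t:ℝ)+1 := by exact_mod_cast Finset.mem_range.mp hi
          linarith)
  have hWpos : (0:ℝ) < W := lt_of_lt_of_le (by positivity) hWlow
  have hNp : (0:ℝ) < N^(2*t+1) := by positivity
  have hVabs : |V| ≤ N^t := by
    rw [hV, Finset.abs_prod]
    calc ∏ r ∈ Finset.range t, |N - 1 - X - (r:ℝ)| ≤ ∏ _r ∈ Finset.range t, N :=
          Finset.prod_le_prod (fun i _ => abs_nonneg _)
            (fun i hi => hxV i (Finset.mem_range.mp hi))
      _ = N^t := by rw [Finset.prod_const, Finset.card_range]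
  have hXt : X^t ≤ N^t := pow_le_pow_left₀ (by linarith) (by linarith) t
  have hXt0 : (0:ℝ) ≤ X^t := by positivity
  have hNXt : (N - X)^t ≤ N^t := pow_le_pow_left₀ (by linarith) (by linarith) t
  have hNXt0 : (0:ℝ) ≤ (N - X)^t := by
    have : (0:ℝ) ≤ N - X := by linarith
    positivity
  have key : U * V / W - X^t * (N - X)^t / N^(2*t+1)
      = (U - X^t) * V / W + X^t * (V - (N - X)^t) / W
        + X^t * (N - X)^t * (N^(2*t+1) - W) / (W * N^(2*t+1)) := by
    field_simp
    ring
  rw [key]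
  have tri := abs_add_three ((U - X^t) * V / W) (X^t * (V - (N - X)^t) / W)
    (X^t * (N - X)^t * (N^(2*t+1) - W) / (W * N^(2*t+1)))
  refine tri.trans ?_
  have hT1 : |(U - X^t) * V / W| ≤ (t * t * N^(t-1)) * N^t / ((N/2)^(2*t+1)) := by
    rw [abs_div, abs_mul, abs_of_pos hWpos]
    exact div_le_div₀ (by positivity)
      (mul_le_mul hUe hVabs (abs_nonneg _) (by positivity)) (by positivity) hWlow
  have hT2 : |X^t * (V - (N - X)^t) / W| ≤ N^t * (t * t * N^(t-1)) / ((N/2)^(2*t+1)) := by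
    rw [abs_div, abs_mul, abs_of_pos hWpos, abs_of_nonneg hXt0]
    exact div_le_div₀ (by positivity)
      (mul_le_mul hXt hVe (abs_nonneg _) (by positivity)) (by positivity) hWlow
  have hT3 : |X^t * (N - X)^t * (N^(2*t+1) - W) / (W * N^(2*t+1))|
      ≤ N^t * N^t * ((2*(t:ℝ)+1) * (2*(t:ℝ)+1) * N^(2*t)) / ((N/2)^(2*t+1) * N^(2*t+1)) := by
    rw [abs_div, abs_mul, abs_mul, abs_of_nonneg hXt0, abs_of_nonneg hNXt0,
      abs_of_pos (mul_pos hWpos hNp)]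
    refine div_le_div₀ (by positivity) ?_ (by positivity)
      (mul_le_mul_of_nonneg_right hWlow hNp.le)
    exact mul_le_mul (mul_le_mul hXt hNXt hNXt0 (by positivity)) hWe (abs_nonneg _)
      (by positivity)
  have hF1 : (t * t * N^(t-1)) * N^t / ((N/2)^(2*t+1)) ≤ 2^(2*t+1) * (t:ℝ)^2 / N^2 := by
    rcases Nat.eq_zero_or_pos t with h0 | h0
    · subst h0; simp
    · obtain ⟨s, rfl⟩ : ∃ s, t = s + 1 := ⟨t - 1, by omega⟩
      have hpow : (N/2)^(2*(s+1)+1) = N^(2*(s+1)+1)/2^(2*(s+1)+1) := div_pow N 2 _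
      rw [hpow, div_div_eq_mul_div, div_le_div_iff₀ (by positivity) (by positivity)]
      simp only [Nat.add_sub_cancel]
      have hNe : N^s * N^(s+1) * N^2 = N^(2*(s+1)+1) := by
        rw [← pow_add, ← pow_add]; congr 1; ring
      push_cast
      linear_combination (2:ℝ)^(2*(s+1)+1) * ((s:ℝ)+1)^2 * hNe
  have hF2 : N^t * (t * t * N^(t-1)) / ((N/2)^(2*t+1)) ≤ 2^(2*t+1) * (t:ℝ)^2 / N^2 := by
    have he : N^t * (t * t * N^(t-1)) = (t * t * N^(t-1)) * N^t := by ring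
    rw [he]; exact hF1
  have hF3 : N^t * N^t * ((2*(t:ℝ)+1) * (2*(t:ℝ)+1) * N^(2*t)) / ((N/2)^(2*t+1) * N^(2*t+1))
      ≤ 2^(2*t+1) * (2*(t:ℝ)+1)^2 / N^2 := by
    have hD : (N/2)^(2*t+1) * N^(2*t+1) = N^(4*t+2)/2^(2*t+1) := by
      rw [div_pow, div_mul_eq_mul_div, ← pow_add]; congr 2; ring
    rw [hD, div_div_eq_mul_div, div_le_div_iff₀ (by positivity) (by positivity)]
    have hNe : N^t * N^t * N^(2*t) * N^2 = N^(4*t+2) := by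
      rw [← pow_add, ← pow_add, ← pow_add]; congr 1; ring
    linear_combination (2:ℝ)^(2*t+1) * (2*(t:ℝ)+1)^2 * hNe
  have hsum : 2^(2*t+1) * (t:ℝ)^2 / N^2 + 2^(2*t+1) * (t:ℝ)^2 / N^2
      + 2^(2*t+1) * (2*(t:ℝ)+1)^2 / N^2
      = 2^(2*t+1) * (2*(t:ℝ)^2 + (2*(t:ℝ)+1)^2) / N^2 := by ring
  linarith [hT1.trans hF1, hT2.trans hF2, hT3.trans hF3]

lemma pnn_eq (t n j : ℕ) (hj1 : t ≤ j) (hj2 : j + t + 1 ≤ n) :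
    pnn t n j = (∏ r ∈ Finset.range t, ((j:ℝ) - r)) * (∏ r ∈ Finset.range t, ((n:ℝ) - 1 - j - r))
        / (∏ r ∈ Finset.range (2*t+1), ((n:ℝ) - r)) / betaFun ((t:ℝ)+1) ((t:ℝ)+1) := by
  have hm : 2*t + 1 ≤ n := by omega
  set m := n - (2*t+1) with hmdef
  have him : j - t ≤ m := by omega
  rw [pnn, if_pos hj1, betaBinPMF]
  have harg1 : (t:ℝ) + 1 + ((j - t : ℕ) : ℝ) = ((j:ℕ):ℝ) + 1 := by
    have : ((j - t : ℕ) : ℝ) = (j:ℝ) - t := by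
      rw [Nat.cast_sub hj1]
    rw [this]; ring
  have harg2 : (t:ℝ) + 1 + ((m - (j - t) : ℕ) : ℝ) = (((n - 1 - j : ℕ)):ℝ) + 1 := by
    have e : m - (j - t) = n - 1 - j - t := by omega
    rw [e]
    have e2 : ((n - 1 - j - t : ℕ) : ℝ) = ((n - 1 - j : ℕ):ℝ) - t := by
      rw [Nat.cast_sub (by omega : t ≤ n - 1 - j)]
    rw [e2]; ring
  rw [harg1, harg2, betaFun_nat_s7]
  have hUe : (∏ r ∈ Finset.range t, ((j:ℝ) - r)) = ((j.descFactorial t : ℕ) : ℝ) := by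
    rw [Nat.descFactorial_eq_prod_range, Nat.cast_prod]
    exact Finset.prod_congr rfl fun r hr => by
      rw [Nat.cast_sub (le_of_lt (lt_of_lt_of_le (Finset.mem_range.mp hr) hj1))]
  have hVe : (∏ r ∈ Finset.range t, ((n:ℝ) - 1 - j - r))
      = (((n-1-j).descFactorial t : ℕ) : ℝ) := by
    rw [Nat.descFactorial_eq_prod_range, Nat.cast_prod]
    refine Finset.prod_congr rfl fun r hr => ?_
    have hr' : r ≤ n - 1 - j := by
      have := Finset.mem_range.mp hr; omega
    have e3 : ((n - 1 - j : ℕ) : ℝ) = (n:ℝ) - 1 - j := by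
      rw [show n - 1 - j = n - (1 + j) by omega, Nat.cast_sub (by omega : 1 + j ≤ n)]
      push_cast; ring
    rw [Nat.cast_sub hr', e3]
  have hWe : (∏ r ∈ Finset.range (2*t+1), ((n:ℝ) - r))
      = ((n.descFactorial (2*t+1) : ℕ) : ℝ) := by
    rw [Nat.descFactorial_eq_prod_range, Nat.cast_prod]
    refine Finset.prod_congr rfl fun r hr => ?_
    have hh := Finset.mem_range.mp hr
    rw [Nat.cast_sub (by omega : r ≤ n)]
  rw [hUe, hVe, hWe]
  have e1 : j + (n - 1 - j) + 1 = n := by omega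
  have key : (m.choose (j-t)) * (j-t).factorial * (m - (j-t)).factorial = m.factorial :=
    Nat.choose_mul_factorial_mul_factorial him
  have h2 : (j-t).factorial * j.descFactorial t = j.factorial :=
    Nat.factorial_mul_descFactorial hj1
  have h3 : (n-1-j-t).factorial * (n-1-j).descFactorial t = (n-1-j).factorial :=
    Nat.factorial_mul_descFactorial (by omega)
  have h4 : (n - (2*t+1)).factorial * n.descFactorial (2*t+1) = n.factorial :=
    Nat.factorial_mul_descFactorial hm
  have e2 : m - (j - t) = n - 1 - j - t := by omega
  have G : m.choose (j-t) * j.factorial * (n-1-j).factorial * n.descFactorial (2*t+1)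
      = j.descFactorial t * (n-1-j).descFactorial t * n.factorial := by
    rw [← h2, ← h3, ← h4, ← key, e2]
    ring
  have GR : (m.choose (j-t) : ℝ) * j.factorial * (n-1-j).factorial * n.descFactorial (2*t+1)
      = (j.descFactorial t : ℝ) * (n-1-j).descFactorial t * n.factorial := by
    exact_mod_cast congrArg (Nat.cast (R := ℝ)) G
  have hnfac : ((n.factorial : ℕ) : ℝ) ≠ 0 := by
    exact_mod_cast (Nat.factorial_pos n).ne'
  have hdesc : ((n.descFactorial (2*t+1) : ℕ) : ℝ) ≠ 0 := by
    have hpos : 0 < n.descFactorial (2*t+1) := by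
      rcases Nat.eq_zero_or_pos (n.descFactorial (2*t+1)) with h0 | h0
      · exfalso
        exact absurd ((Nat.descFactorial_eq_zero_iff_lt).mp h0) (by omega)
      · exact h0
    exact_mod_cast hpos.ne'
  rw [e1]
  congr 1
  rw [show ((m.choose (j-t) : ℕ):ℝ)
        * ((j.factorial : ℝ) * ((n-1-j).factorial : ℝ) / (n.factorial : ℝ))
      = ((m.choose (j-t) : ℕ):ℝ) * ((j.factorial : ℝ) * ((n-1-j).factorial : ℝ))
        / (n.factorial : ℝ) from by ring,
    div_eq_div_iff hnfac hdesc]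
  linear_combination GR

lemma pow_abs_diff_le : ∀ (t : ℕ) (x y : ℝ), |x| ≤ 1 → |y| ≤ 1 → |x^t - y^t| ≤ t * |x - y|
  | 0, x, y, _, _ => by simp
  | t + 1, x, y, hx, hy => by
    have ih := pow_abs_diff_le t x y hx hy
    have key : x^(t+1) - y^(t+1) = x^t * (x - y) + y * (x^t - y^t) := by ring
    rw [key]
    calc |x^t * (x - y) + y * (x^t - y^t)| ≤ |x^t * (x - y)| + |y * (x^t - y^t)| := abs_add_le _ _
      _ = |x|^t * |x - y| + |y| * |x^t - y^t| := by rw [abs_mul, abs_mul, abs_pow]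
      _ ≤ 1 * |x - y| + 1 * (t * |x - y|) :=
          add_le_add (mul_le_mul_of_nonneg_right (pow_le_one₀ (abs_nonneg x) hx) (abs_nonneg _))
            (mul_le_mul hy ih (abs_nonneg _) one_pos.le)
      _ = (↑(t+1)) * |x - y| := by push_cast; ring

lemma g_lip (t : ℕ) (z c : ℝ) (hz0 : 0 ≤ z) (hz1 : z ≤ 1) (hc0 : 0 ≤ c) (hc1 : c ≤ 1) :
    |z^t * (1-z)^t - c^t * (1-c)^t| ≤ 2 * t * |z - c| := by
  have h1 : |z^t - c^t| ≤ t * |z - c| :=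
    pow_abs_diff_le t z c (abs_le.mpr ⟨by linarith, hz1⟩) (abs_le.mpr ⟨by linarith, hc1⟩)
  have h2 : |(1-z)^t - (1-c)^t| ≤ t * |z - c| := by
    have h := pow_abs_diff_le t (1-z) (1-c) (abs_le.mpr ⟨by linarith, by linarith⟩)
      (abs_le.mpr ⟨by linarith, by linarith⟩)
    have e : |1 - z - (1 - c)| = |z - c| := by rw [show 1-z-(1-c) = -(z-c) by ring, abs_neg]
    rwa [e] at h
  have key : z^t * (1-z)^t - c^t * (1-c)^t
      = (z^t - c^t) * (1-z)^t + c^t * ((1-z)^t - (1-c)^t) := by ring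
  rw [key]
  have hb1 : |(1-z)^t| ≤ 1 := by
    rw [abs_pow]; exact pow_le_one₀ (abs_nonneg _) (abs_le.mpr ⟨by linarith, by linarith⟩)
  have hb2 : |c^t| ≤ 1 := by
    rw [abs_pow]; exact pow_le_one₀ (abs_nonneg _) (abs_le.mpr ⟨by linarith, hc1⟩)
  calc |(z^t - c^t) * (1-z)^t + c^t * ((1-z)^t - (1-c)^t)|
      ≤ |z^t - c^t| * |(1-z)^t| + |c^t| * |(1-z)^t - (1-c)^t| := by
        refine (abs_add_le _ _).trans (le_of_eq ?_); rw [abs_mul, abs_mul]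
    _ ≤ (t * |z-c|) * 1 + 1 * (t * |z-c|) :=
        add_le_add (mul_le_mul h1 hb1 (abs_nonneg _) (by positivity))
          (mul_le_mul hb2 h2 (abs_nonneg _) one_pos.le)
    _ = 2 * t * |z - c| := by ring

lemma cell_est (t n j : ℕ) (hn : 0 < n) (hj : j + 1 ≤ n) :
    |(∫ z in ((j:ℝ)/n)..(((j:ℝ)+1)/n), z^t * (1-z)^t)
      - (j:ℝ)^t * ((n:ℝ) - j)^t / (n:ℝ)^(2*t+1)| ≤ 2*t/(n:ℝ)^2 := by
  have hN : (0:ℝ) < n := by exact_mod_cast hn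
  have hjn : (j:ℝ) + 1 ≤ n := by exact_mod_cast hj
  set a := (j:ℝ)/n with ha
  set b := ((j:ℝ)+1)/n with hb
  have hle : a ≤ b := by rw [ha, hb]; gcongr; linarith
  have hab : b - a = 1/n := by rw [ha, hb]; field_simp; ring
  have ha0 : 0 ≤ a := by positivity
  have hb1 : b ≤ 1 := by rw [hb, div_le_one hN]; linarith
  have ha1 : a ≤ 1 := le_trans hle hb1
  have hconst : (j:ℝ)^t * ((n:ℝ) - j)^t / (n:ℝ)^(2*t+1)
      = ∫ _z in a..b, (a^t * (1-a)^t) := by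
    rw [intervalIntegral.integral_const, smul_eq_mul, hab, ha]
    rw [show (1 - (j:ℝ)/n) = ((n:ℝ)-(j:ℝ))/n from by field_simp, div_pow, div_pow,
      show (n:ℝ)^(2*t+1) = n^t * n^t * n from by
        rw [← pow_add, ← pow_succ]; congr 1; omega]
    ring
  have hcont : Continuous fun z : ℝ => z^t * (1-z)^t := by fun_prop
  rw [hconst, ← intervalIntegral.integral_sub (hcont.intervalIntegrable _ _)
    intervalIntegrable_const]
  have key : ∀ z ∈ Set.uIoc a b, ‖z^t * (1-z)^t - a^t * (1-a)^t‖ ≤ 2*t*(1/n) := by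
    intro z hz
    rw [Set.uIoc_of_le hle] at hz
    obtain ⟨hz1, hz2⟩ := hz
    have hz0 : 0 ≤ z := le_trans ha0 hz1.le
    have hz1' : z ≤ 1 := le_trans hz2 hb1
    rw [Real.norm_eq_abs]
    refine (g_lip t z a hz0 hz1' ha0 ha1).trans ?_
    have hza : |z - a| ≤ 1/n := by
      rw [abs_of_nonneg (by linarith)]
      linarith
    gcongr
  have hfin := intervalIntegral.norm_integral_le_of_norm_le_const key
  rw [Real.norm_eq_abs] at hfin
  refine hfin.trans ?_
  rw [hab, abs_of_pos (by positivity : (0:ℝ) < 1/n)]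
  exact le_of_eq (by ring)

lemma pnn_zero (t n j : ℕ) (hn : 2*t+1 < n) (h : j < t ∨ n < j + t + 1) : pnn t n j = 0 := by
  rw [pnn]
  split_ifs with ht
  · have h2 : n < j + t + 1 := by omega
    have hc : (n - (2*t+1)).choose (j - t) = 0 :=
      Nat.choose_eq_zero_of_lt (show n - (2*t+1) < j - t by omega)
    rw [betaBinPMF, hc, Nat.cast_zero, zero_mul, zero_div]
  · rfl

lemma q_abs_le (t n j : ℕ) (hn : 0 < n) (hj : j + 1 ≤ n) :
    |∫ z in ((j:ℝ)/n)..(((j:ℝ)+1)/n), z^t * (1-z)^t| ≤ 1/n := by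
  have hN : (0:ℝ) < n := by exact_mod_cast hn
  have hjn : (j:ℝ) + 1 ≤ n := by exact_mod_cast hj
  have hle : (j:ℝ)/n ≤ ((j:ℝ)+1)/n := by gcongr; linarith
  have key : ∀ z ∈ Set.uIoc ((j:ℝ)/n) (((j:ℝ)+1)/n), ‖z^t * (1-z)^t‖ ≤ 1 := by
    intro z hz
    rw [Set.uIoc_of_le hle] at hz
    have hz0 : 0 ≤ z := le_trans (by positivity) hz.1.le
    have hz1 : z ≤ 1 := le_trans hz.2 (by rw [div_le_one hN]; linarith)
    rw [Real.norm_eq_abs, abs_mul, abs_pow, abs_pow]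
    have e1 : |z|^t ≤ 1 := pow_le_one₀ (abs_nonneg _) (abs_le.mpr ⟨by linarith, hz1⟩)
    have e2 : |1-z|^t ≤ 1 := pow_le_one₀ (abs_nonneg _) (abs_le.mpr ⟨by linarith, by linarith⟩)
    calc |z|^t * |1-z|^t ≤ 1 * 1 := mul_le_mul e1 e2 (by positivity) one_pos.le
      _ = 1 := by norm_num
  have h := intervalIntegral.norm_integral_le_of_norm_le_const key
  rw [Real.norm_eq_abs] at h
  refine h.trans (le_of_eq ?_)
  rw [show ((j:ℝ)+1)/n - (j:ℝ)/n = 1/n from (by field_simp; ring), abs_of_pos (by positivity)]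
  ring

lemma I_abs_le (t n j : ℕ) (hn : 0 < n) (hj : j + 1 ≤ n) (B : ℝ) (hB : 0 < B) :
    |∫ z in ((j:ℝ)/n)..(((j:ℝ)+1)/n),
        2 * (if (1/3 < z ∧ z < 1/2) ∨ (2/3 < z ∧ z ≤ 1) then (1:ℝ) else 0)
          * z ^ (t:ℝ) * (1-z) ^ (t:ℝ) / B| ≤ 2/((n:ℝ)*B) := by
  have hN : (0:ℝ) < n := by exact_mod_cast hn
  have hjn : (j:ℝ) + 1 ≤ n := by exact_mod_cast hj
  have hle : (j:ℝ)/n ≤ ((j:ℝ)+1)/n := by gcongr; linarith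
  have key : ∀ z ∈ Set.uIoc ((j:ℝ)/n) (((j:ℝ)+1)/n),
      ‖2 * (if (1/3 < z ∧ z < 1/2) ∨ (2/3 < z ∧ z ≤ 1) then (1:ℝ) else 0)
        * z ^ (t:ℝ) * (1-z) ^ (t:ℝ) / B‖ ≤ 2/B := by
    intro z hz
    rw [Set.uIoc_of_le hle] at hz
    have hz0 : 0 ≤ z := le_trans (by positivity) hz.1.le
    have hz1 : z ≤ 1 := le_trans hz.2 (by rw [div_le_one hN]; linarith)
    set I := (if (1/3 < z ∧ z < 1/2) ∨ (2/3 < z ∧ z ≤ 1) then (1:ℝ) else 0) with hI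
    have hI0 : 0 ≤ I := by rw [hI]; split_ifs <;> norm_num
    have hI1 : I ≤ 1 := by rw [hI]; split_ifs <;> norm_num
    have hr1 : 0 ≤ z ^ (t:ℝ) := Real.rpow_nonneg hz0 _
    have hr2 : z ^ (t:ℝ) ≤ 1 := Real.rpow_le_one hz0 hz1 (by positivity)
    have hr3 : 0 ≤ (1-z) ^ (t:ℝ) := Real.rpow_nonneg (by linarith) _
    have hr4 : (1-z) ^ (t:ℝ) ≤ 1 := Real.rpow_le_one (by linarith) (by linarith) (by positivity)
    rw [Real.norm_eq_abs, abs_of_nonneg (by positivity)]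
    have c1 : I * z ^ (t:ℝ) ≤ 1 := mul_le_one₀ hI1 hr1 hr2
    have c2 : I * z ^ (t:ℝ) * (1-z) ^ (t:ℝ) ≤ 1 := mul_le_one₀ c1 hr3 hr4
    have hXB : (I * z ^ (t:ℝ) * (1-z) ^ (t:ℝ)) * B ≤ 1 * B := mul_le_mul_of_nonneg_right c2 hB.le
    rw [div_le_div_iff₀ hB hB]
    linarith [hXB]
  have h := intervalIntegral.norm_integral_le_of_norm_le_const key
  rw [Real.norm_eq_abs] at h
  refine h.trans (le_of_eq ?_)
  rw [show ((j:ℝ)+1)/n - (j:ℝ)/n = 1/n from (by field_simp; ring), abs_of_pos (by positivity)]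
  field_simp

lemma I_eq_of_one (t n j : ℕ) (B : ℝ)
    (hcond : ∀ z ∈ Set.uIcc ((j:ℝ)/n) (((j:ℝ)+1)/n),
      (1/3 < z ∧ z < 1/2) ∨ (2/3 < z ∧ z ≤ 1)) :
    (∫ z in ((j:ℝ)/n)..(((j:ℝ)+1)/n),
        2 * (if (1/3 < z ∧ z < 1/2) ∨ (2/3 < z ∧ z ≤ 1) then (1:ℝ) else 0)
          * z ^ (t:ℝ) * (1-z) ^ (t:ℝ) / B)
      = (2/B) * ∫ z in ((j:ℝ)/n)..(((j:ℝ)+1)/n), z^t * (1-z)^t := by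
  rw [← intervalIntegral.integral_const_mul]
  refine intervalIntegral.integral_congr fun z hz => ?_
  rw [if_pos (hcond z hz), Real.rpow_natCast, Real.rpow_natCast]
  ring

lemma I_eq_of_zero (t n j : ℕ) (B : ℝ)
    (hcond : ∀ z ∈ Set.uIcc ((j:ℝ)/n) (((j:ℝ)+1)/n),
      ¬((1/3 < z ∧ z < 1/2) ∨ (2/3 < z ∧ z ≤ 1))) :
    (∫ z in ((j:ℝ)/n)..(((j:ℝ)+1)/n),
        2 * (if (1/3 < z ∧ z < 1/2) ∨ (2/3 < z ∧ z ≤ 1) then (1:ℝ) else 0)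
          * z ^ (t:ℝ) * (1-z) ^ (t:ℝ) / B) = 0 := by
  have h : (∫ z in ((j:ℝ)/n)..(((j:ℝ)+1)/n),
      2 * (if (1/3 < z ∧ z < 1/2) ∨ (2/3 < z ∧ z ≤ 1) then (1:ℝ) else 0)
        * z ^ (t:ℝ) * (1-z) ^ (t:ℝ) / B)
      = ∫ _z in ((j:ℝ)/n)..(((j:ℝ)+1)/n), (0:ℝ) := by
    refine intervalIntegral.integral_congr fun z hz => ?_
    rw [if_neg (hcond z hz)]
    ring
  rw [h, intervalIntegral.integral_zero]

lemma T_eq (n : ℕ) : ((n:ℝ) - 1) / (1 + 1/2) = 2*((n:ℝ)-1)/3 := by norm_num; ring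

lemma indA1_mem (α : ℝ) (n j : ℕ) : 0 ≤ indA1 α n j ∧ indA1 α n j ≤ 1 := by
  rw [indA1]
  by_cases hT : ((n:ℝ) - 1) / (1 + α) < (j:ℝ)
  · rw [if_neg (fun hc => absurd hc.1 (not_le.mpr hT)), if_pos hT]; norm_num
  · rw [if_neg hT]; split_ifs <;> norm_num

lemma indA2_mem (α : ℝ) (n j : ℕ) : 0 ≤ indA2 α n j ∧ indA2 α n j ≤ 1 := by
  rw [indA2]
  by_cases hT : ((n:ℝ) - 1) / (1 + α) < (j:ℝ)
  · rw [if_neg (fun hc => absurd hc.1 (not_le.mpr hT)), if_pos hT]; norm_num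
  · rw [if_neg hT]; split_ifs <;> norm_num

lemma c_eq_two_mid (n j : ℕ) (hn : 0 < n)
    (h1 : (n:ℝ)/3 + 2 < j) (h2 : (j:ℝ) < (n:ℝ)/2 - 2) :
    indA1 (1/2) n j + indA2 (1/2) n j = 2 := by
  rw [indA1, indA2, T_eq]
  have hN : (1:ℝ) ≤ n := by exact_mod_cast hn
  have hA1 : (j:ℝ) ≤ 2*((n:ℝ)-1)/3 ∧ ((n:ℝ)-1-j) ≤ 2*((n:ℝ)-1)/3
      ∧ (j:ℝ) ≤ (n:ℝ)-1-j := ⟨by linarith, by linarith, by linarith⟩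
  have hA2 : (j:ℝ) ≤ 2*((n:ℝ)-1)/3 ∧ ((n:ℝ)-1-j) ≤ 2*((n:ℝ)-1)/3
      ∧ (j:ℝ) < (n:ℝ)-1-j := ⟨by linarith, by linarith, by linarith⟩
  have hB : ¬(2*((n:ℝ)-1)/3 < (j:ℝ)) := by push_neg; linarith
  rw [if_pos hA1, if_pos hA2, if_neg hB]
  norm_num

lemma c_eq_two_high (n j : ℕ) (h1 : 2*(n:ℝ)/3 + 2 < j) :
    indA1 (1/2) n j + indA2 (1/2) n j = 2 := by
  rw [indA1, indA2, T_eq]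
  have hB : 2*((n:ℝ)-1)/3 < (j:ℝ) := by linarith
  have hA1 : ¬((j:ℝ) ≤ 2*((n:ℝ)-1)/3 ∧ ((n:ℝ)-1-j) ≤ 2*((n:ℝ)-1)/3
      ∧ (j:ℝ) ≤ (n:ℝ)-1-j) := fun hc => absurd hc.1 (not_le.mpr hB)
  have hA2 : ¬((j:ℝ) ≤ 2*((n:ℝ)-1)/3 ∧ ((n:ℝ)-1-j) ≤ 2*((n:ℝ)-1)/3
      ∧ (j:ℝ) < (n:ℝ)-1-j) := fun hc => absurd hc.1 (not_le.mpr hB)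
  rw [if_neg hA1, if_neg hA2, if_pos hB]
  norm_num

lemma c_eq_zero_low (n j : ℕ) (h1 : (j:ℝ) < (n:ℝ)/3 - 2) :
    indA1 (1/2) n j + indA2 (1/2) n j = 0 := by
  rw [indA1, indA2, T_eq]
  have hA1 : ¬((j:ℝ) ≤ 2*((n:ℝ)-1)/3 ∧ ((n:ℝ)-1-j) ≤ 2*((n:ℝ)-1)/3
      ∧ (j:ℝ) ≤ (n:ℝ)-1-j) := fun hc => by have := hc.2.1; linarith
  have hA2 : ¬((j:ℝ) ≤ 2*((n:ℝ)-1)/3 ∧ ((n:ℝ)-1-j) ≤ 2*((n:ℝ)-1)/3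
      ∧ (j:ℝ) < (n:ℝ)-1-j) := fun hc => by have := hc.2.1; linarith
  have hB : ¬(2*((n:ℝ)-1)/3 < (j:ℝ)) := by push_neg; linarith
  rw [if_neg hA1, if_neg hA2, if_neg hB]
  norm_num

lemma c_eq_zero_mid (n j : ℕ)
    (h1 : (n:ℝ)/2 + 2 < j) (h2 : (j:ℝ) < 2*(n:ℝ)/3 - 2) :
    indA1 (1/2) n j + indA2 (1/2) n j = 0 := by
  rw [indA1, indA2, T_eq]
  have hA1 : ¬((j:ℝ) ≤ 2*((n:ℝ)-1)/3 ∧ ((n:ℝ)-1-j) ≤ 2*((n:ℝ)-1)/3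
      ∧ (j:ℝ) ≤ (n:ℝ)-1-j) := fun hc => by have := hc.2.2; linarith
  have hA2 : ¬((j:ℝ) ≤ 2*((n:ℝ)-1)/3 ∧ ((n:ℝ)-1-j) ≤ 2*((n:ℝ)-1)/3
      ∧ (j:ℝ) < (n:ℝ)-1-j) := fun hc => by have := hc.2.2; linarith
  have hB : ¬(2*((n:ℝ)-1)/3 < (j:ℝ)) := by push_neg; linarith
  rw [if_neg hA1, if_neg hA2, if_neg hB]
  norm_num

end Aux

set_option maxHeartbeats 1000000 in
/-- **Smoothness of the shape function.** For QuickMergesort with buffer parameter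
`α = 1/2` and median-of-`(2t+1)` pivots, the weights `w_{n,j} = p_n(j)·(A₁(j)+A₂(j))`
are approximated by the shape function
`w(z) = 2·[1/3 < z < 1/2 ∨ 2/3 < z ≤ 1]·z^t (1−z)^t / B(t+1,t+1)` at rate `O(n^{−1})`. -/
theorem shape_function_condition (t : ℕ) :
    ∃ C : ℝ, ∃ N : ℕ, ∀ n ≥ N,
      (∑ j ∈ Finset.range n,
        |pnn t n j * (indA1 (1/2) n j + indA2 (1/2) n j)
          - ∫ z in (j : ℝ) / n..((j : ℝ) + 1) / n,
              2 * (if (1/3 < z ∧ z < 1/2) ∨ (2/3 < z ∧ z ≤ 1) then (1:ℝ) else 0)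
                * z ^ (t : ℝ) * (1 - z) ^ (t : ℝ) / betaFun ((t : ℝ) + 1) ((t : ℝ) + 1)|)
      ≤ C * (n : ℝ)⁻¹ := by
  
  classical
  set B := betaFun ((t:ℝ)+1) ((t:ℝ)+1) with hBdef
  have hB : 0 < B := betaFun_pos t t
  set C1 : ℝ := 2^(2*t+1) * (2*(t:ℝ)^2 + (2*(t:ℝ)+1)^2) with hC1def
  have hC1 : 0 < C1 := by rw [hC1def]; positivity
  refine ⟨(2*(C1 + 2*(t:ℝ)) + 4*(t:ℝ) + 72)/B, 4*t+5, fun n hn => ?_⟩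
  have hn0 : 0 < n := by omega
  have hN : (0:ℝ) < n := by exact_mod_cast hn0
  have hn4 : 4*t + 4 ≤ n := by omega
  have key : ∀ j ∈ Finset.range n,
      |pnn t n j * (indA1 (1/2) n j + indA2 (1/2) n j)
          - ∫ z in (j : ℝ) / n..((j : ℝ) + 1) / n,
              2 * (if (1/3 < z ∧ z < 1/2) ∨ (2/3 < z ∧ z ≤ 1) then (1:ℝ) else 0)
                * z ^ (t : ℝ) * (1 - z) ^ (t : ℝ) / B|
      ≤ (2*((C1 + 2*(t:ℝ))/(n:ℝ)^2/B)
        + (if ¬(t ≤ j ∧ j + t + 1 ≤ n) then 2/((n:ℝ)*B) else 0))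
          + (if ((n:ℝ)/3 - 2 ≤ j ∧ (j:ℝ) ≤ (n:ℝ)/3 + 2)
              ∨ ((n:ℝ)/2 - 2 ≤ j ∧ (j:ℝ) ≤ (n:ℝ)/2 + 2)
              ∨ (2*(n:ℝ)/3 - 2 ≤ j ∧ (j:ℝ) ≤ 2*(n:ℝ)/3 + 2)
            then 4/((n:ℝ)*B) else 0) := by
    intro j hj
    have hjn : j < n := Finset.mem_range.mp hj
    have hj1 : j + 1 ≤ n := hjn
    have hjnR : (j:ℝ) + 1 ≤ n := by exact_mod_cast hj1
    have hle : (j:ℝ)/n ≤ ((j:ℝ)+1)/n := by gcongr; linarith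
    set q := ∫ z in ((j:ℝ)/n)..(((j:ℝ)+1)/n), z^t * (1-z)^t with hqdef
    set Ix := ∫ z in ((j:ℝ)/n)..(((j:ℝ)+1)/n),
        2 * (if (1/3 < z ∧ z < 1/2) ∨ (2/3 < z ∧ z ≤ 1) then (1:ℝ) else 0)
          * z ^ (t:ℝ) * (1-z) ^ (t:ℝ) / B with hIdef
    set c := indA1 (1/2) n j + indA2 (1/2) n j with hcdef
    have hc0 : 0 ≤ c := by
      rw [hcdef]
      linarith [(indA1_mem (1/2) n j).1, (indA2_mem (1/2) n j).1]
    have hc2 : c ≤ 2 := by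
      rw [hcdef]
      linarith [(indA1_mem (1/2) n j).2, (indA2_mem (1/2) n j).2]
    have hqb : |q| ≤ 1/n := q_abs_le t n j hn0 hj1
    have hIb : |Ix| ≤ 2/((n:ℝ)*B) := I_abs_le t n j hn0 hj1 B hB
    have hsplit : pnn t n j * c - Ix = c * (pnn t n j - q/B) + (c * (q/B) - Ix) := by ring
    have habs : |pnn t n j * c - Ix| ≤ c * |pnn t n j - q/B| + |c * (q/B) - Ix| := by
      rw [hsplit]
      refine (abs_add_le _ _).trans ?_
      rw [abs_mul, abs_of_nonneg hc0]
    refine habs.trans (add_le_add ?_ ?_)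
    · -- E1 bound
      by_cases hint : t ≤ j ∧ j + t + 1 ≤ n
      · rw [if_neg (not_not_intro hint), add_zero]
        have hpe := pnn_eq t n j hint.1 hint.2
        rw [← hBdef] at hpe
        have hIE := interior_est t n j hn4 hint.1 hint.2
        rw [← hC1def] at hIE
        have hCE := cell_est t n j hn0 hj1
        rw [← hqdef] at hCE
        have hdiff : |pnn t n j - q/B| ≤ (C1 + 2*(t:ℝ))/(n:ℝ)^2/B := by
          rw [hpe, div_sub_div_same, abs_div, abs_of_pos hB]
          gcongr
          calc |(∏ r ∈ Finset.range t, ((j:ℝ) - r))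
                  * (∏ r ∈ Finset.range t, ((n:ℝ) - 1 - j - r))
                  / (∏ r ∈ Finset.range (2*t+1), ((n:ℝ) - r)) - q|
                ≤ |(∏ r ∈ Finset.range t, ((j:ℝ) - r))
                    * (∏ r ∈ Finset.range t, ((n:ℝ) - 1 - j - r))
                    / (∏ r ∈ Finset.range (2*t+1), ((n:ℝ) - r))
                    - (j:ℝ)^t * ((n:ℝ) - j)^t / (n:ℝ)^(2*t+1)|
                  + |(j:ℝ)^t * ((n:ℝ) - j)^t / (n:ℝ)^(2*t+1) - q| := by
                  exact abs_sub_le _ _ _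
              _ ≤ C1/(n:ℝ)^2 + 2*t/(n:ℝ)^2 := by
                  refine add_le_add hIE ?_
                  rw [abs_sub_comm]
                  exact hCE
              _ = (C1 + 2*(t:ℝ))/(n:ℝ)^2 := by ring
        exact mul_le_mul hc2 hdiff (abs_nonneg _) (by norm_num)
      · rw [if_pos hint]
        have hz : pnn t n j = 0 := pnn_zero t n j (by omega) (by omega)
        have hdiff : |pnn t n j - q/B| ≤ (1/n)/B := by
          rw [hz, zero_sub, abs_neg, abs_div, abs_of_pos hB]
          gcongr
        have h1 : c * |pnn t n j - q/B| ≤ 2 * ((1/n)/B) :=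
          mul_le_mul hc2 hdiff (abs_nonneg _) (by norm_num)
        have h2 : 2 * ((1/(n:ℝ))/B) = 2/((n:ℝ)*B) := by
          field_simp
        have h3 : 0 ≤ 2*((C1 + 2*(t:ℝ))/(n:ℝ)^2/B) := by positivity
        linarith [h1, h2 ▸ h1]
    · -- E2 bound
      by_cases hbad : ((n:ℝ)/3 - 2 ≤ j ∧ (j:ℝ) ≤ (n:ℝ)/3 + 2)
          ∨ ((n:ℝ)/2 - 2 ≤ j ∧ (j:ℝ) ≤ (n:ℝ)/2 + 2)
          ∨ (2*(n:ℝ)/3 - 2 ≤ j ∧ (j:ℝ) ≤ 2*(n:ℝ)/3 + 2)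
      · rw [if_pos hbad]
        have hcq : |c * (q/B)| ≤ 2/((n:ℝ)*B) := by
          rw [abs_mul, abs_of_nonneg hc0, abs_div, abs_of_pos hB]
          calc c * (|q|/B) ≤ 2 * ((1/n)/B) :=
                mul_le_mul hc2 (by gcongr) (by positivity) (by norm_num)
            _ = 2/((n:ℝ)*B) := by field_simp
        calc |c * (q/B) - Ix| ≤ |c * (q/B)| + |Ix| := abs_sub _ _
          _ ≤ 2/((n:ℝ)*B) + 2/((n:ℝ)*B) := add_le_add hcq hIb
          _ = 4/((n:ℝ)*B) := by ring
      · rw [if_neg hbad]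
        push_neg at hbad
        obtain ⟨hbad1, hbad2, hbad3⟩ := hbad
        -- region analysis
        have hucc : Set.uIcc ((j:ℝ)/n) (((j:ℝ)+1)/n)
            = Set.Icc ((j:ℝ)/n) (((j:ℝ)+1)/n) := Set.uIcc_of_le hle
        by_cases h1' : (j:ℝ) < (n:ℝ)/3 - 2
        · -- low region : c = 0, Ix = 0
          have hcz : c = 0 := by rw [hcdef]; exact c_eq_zero_low n j h1'
          have hIz : Ix = 0 := by
            rw [hIdef]
            refine I_eq_of_zero t n j B fun z hz => ?_
            rw [hucc] at hz
            have hup : ((j:ℝ)+1)/n < 1/3 := by rw [div_lt_iff₀ hN]; linarith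
            rintro (⟨ha, _⟩ | ⟨ha, _⟩) <;> linarith [hz.2]
          rw [hcz, hIz]
          simp
        · have h1'' : (n:ℝ)/3 + 2 < j := hbad1 (by linarith [not_lt.mp h1'])
          by_cases h2' : (j:ℝ) < (n:ℝ)/2 - 2
          · -- first good region : c = 2, Ix = (2/B) q
            have hcz : c = 2 := by rw [hcdef]; exact c_eq_two_mid n j hn0 h1'' h2'
            have hIo : Ix = (2/B) * q := by
              rw [hIdef, hqdef]
              refine I_eq_of_one t n j B fun z hz => ?_
              rw [hucc] at hz
              left
              constructor
              · have hlow : 1/3 < (j:ℝ)/n := by rw [lt_div_iff₀ hN]; linarith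
                linarith [hz.1]
              · have hup : ((j:ℝ)+1)/n < 1/2 := by rw [div_lt_iff₀ hN]; linarith
                linarith [hz.2]
            rw [hcz, hIo, show (2:ℝ) * (q/B) - (2/B)*q = 0 from by ring, abs_zero]
          · have h2'' : (n:ℝ)/2 + 2 < j := hbad2 (by linarith [not_lt.mp h2'])
            by_cases h3' : (j:ℝ) < 2*(n:ℝ)/3 - 2
            · -- second zero region
              have hcz : c = 0 := by rw [hcdef]; exact c_eq_zero_mid n j h2'' h3'
              have hIz : Ix = 0 := by
                rw [hIdef]
                refine I_eq_of_zero t n j B fun z hz => ?_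
                rw [hucc] at hz
                have hlow : 1/2 < (j:ℝ)/n := by rw [lt_div_iff₀ hN]; linarith
                have hup : ((j:ℝ)+1)/n < 2/3 := by rw [div_lt_iff₀ hN]; linarith
                rintro (⟨_, hb⟩ | ⟨hb, _⟩) <;> linarith [hz.1, hz.2]
              rw [hcz, hIz]
              simp
            · have h3'' : 2*(n:ℝ)/3 + 2 < j := hbad3 (by linarith [not_lt.mp h3'])
              have hcz : c = 2 := by rw [hcdef]; exact c_eq_two_high n j h3''
              have hIo : Ix = (2/B) * q := by
                rw [hIdef, hqdef]
                refine I_eq_of_one t n j B fun z hz => ?_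
                rw [hucc] at hz
                right
                constructor
                · have hlow : 2/3 < (j:ℝ)/n := by rw [lt_div_iff₀ hN]; linarith
                  linarith [hz.1]
                · have hup : ((j:ℝ)+1)/n ≤ 1 := by rw [div_le_one hN]; linarith
                  linarith [hz.2]
              rw [hcz, hIo, show (2:ℝ) * (q/B) - (2/B)*q = 0 from by ring, abs_zero]
  refine (Finset.sum_le_sum key).trans ?_
  rw [Finset.sum_add_distrib, Finset.sum_add_distrib]
  rw [Finset.sum_const, Finset.card_range]
  rw [← Finset.sum_filter, ← Finset.sum_filter, Finset.sum_const, Finset.sum_const]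
  -- cardinality bounds
  have hcard1 : ((Finset.range n).filter fun j : ℕ => ¬(t ≤ j ∧ j + t + 1 ≤ n)).card ≤ 2*t := by
    have hsub : ((Finset.range n).filter fun j : ℕ => ¬(t ≤ j ∧ j + t + 1 ≤ n))
        ⊆ Finset.range t ∪ Finset.Ico (n-t) n := by
      intro j hj
      rw [Finset.mem_filter, Finset.mem_range] at hj
      rw [Finset.mem_union, Finset.mem_range, Finset.mem_Ico]
      omega
    calc _ ≤ (Finset.range t ∪ Finset.Ico (n-t) n).card := Finset.card_le_card hsub
      _ ≤ (Finset.range t).card + (Finset.Ico (n-t) n).card := Finset.card_union_le _ _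
      _ = t + (n - (n-t)) := by rw [Finset.card_range, Nat.card_Ico]
      _ ≤ 2*t := by omega
  have hcard2 : ((Finset.range n).filter fun j : ℕ =>
      ((n:ℝ)/3 - 2 ≤ (j:ℝ) ∧ (j:ℝ) ≤ (n:ℝ)/3 + 2)
        ∨ ((n:ℝ)/2 - 2 ≤ j ∧ (j:ℝ) ≤ (n:ℝ)/2 + 2)
        ∨ (2*(n:ℝ)/3 - 2 ≤ j ∧ (j:ℝ) ≤ 2*(n:ℝ)/3 + 2)).card ≤ 18 := by
    have hsub : ((Finset.range n).filter fun j : ℕ =>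
        ((n:ℝ)/3 - 2 ≤ (j:ℝ) ∧ (j:ℝ) ≤ (n:ℝ)/3 + 2)
          ∨ ((n:ℝ)/2 - 2 ≤ j ∧ (j:ℝ) ≤ (n:ℝ)/2 + 2)
          ∨ (2*(n:ℝ)/3 - 2 ≤ j ∧ (j:ℝ) ≤ 2*(n:ℝ)/3 + 2))
        ⊆ Finset.Icc ((n-6)/3) ((n+6)/3) ∪ Finset.Icc ((n-4)/2) ((n+4)/2)
          ∪ Finset.Icc ((2*n-6)/3) ((2*n+6)/3) := by
      intro j hj
      rw [Finset.mem_filter, Finset.mem_range] at hj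
      rw [Finset.mem_union, Finset.mem_union, Finset.mem_Icc, Finset.mem_Icc, Finset.mem_Icc]
      rcases hj.2 with ⟨ha, hb⟩ | ⟨ha, hb⟩ | ⟨ha, hb⟩
      · left; left
        have h1 : (n:ℝ) ≤ 3*j + 6 := by linarith
        have h2 : 3*(j:ℝ) ≤ (n:ℝ) + 6 := by linarith
        have h1' : n ≤ 3*j + 6 := by exact_mod_cast h1
        have h2' : 3*j ≤ n + 6 := by exact_mod_cast h2
        omega
      · left; right
        have h1 : (n:ℝ) ≤ 2*j + 4 := by linarith
        have h2 : 2*(j:ℝ) ≤ (n:ℝ) + 4 := by linarith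
        have h1' : n ≤ 2*j + 4 := by exact_mod_cast h1
        have h2' : 2*j ≤ n + 4 := by exact_mod_cast h2
        omega
      · right
        have h1 : 2*(n:ℝ) ≤ 3*j + 6 := by linarith
        have h2 : 3*(j:ℝ) ≤ 2*(n:ℝ) + 6 := by linarith
        have h1' : 2*n ≤ 3*j + 6 := by exact_mod_cast h1
        have h2' : 3*j ≤ 2*n + 6 := by exact_mod_cast h2
        omega
    calc _ ≤ (Finset.Icc ((n-6)/3) ((n+6)/3) ∪ Finset.Icc ((n-4)/2) ((n+4)/2)
          ∪ Finset.Icc ((2*n-6)/3) ((2*n+6)/3)).card := Finset.card_le_card hsub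
      _ ≤ (Finset.Icc ((n-6)/3) ((n+6)/3) ∪ Finset.Icc ((n-4)/2) ((n+4)/2)).card
          + (Finset.Icc ((2*n-6)/3) ((2*n+6)/3)).card := Finset.card_union_le _ _
      _ ≤ (Finset.Icc ((n-6)/3) ((n+6)/3)).card + (Finset.Icc ((n-4)/2) ((n+4)/2)).card
          + (Finset.Icc ((2*n-6)/3) ((2*n+6)/3)).card :=
            Nat.add_le_add_right (Finset.card_union_le _ _) _
      _ = ((n+6)/3 + 1 - (n-6)/3) + ((n+4)/2 + 1 - (n-4)/2) + ((2*n+6)/3 + 1 - (2*n-6)/3) := by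
            rw [Nat.card_Icc, Nat.card_Icc, Nat.card_Icc]
      _ ≤ 18 := by omega
  -- final numeric computation

  have e1 : (0:ℝ) ≤ 2/((n:ℝ)*B) := by positivity
  have e2 : (0:ℝ) ≤ 4/((n:ℝ)*B) := by positivity
  have hc1R : (((Finset.range n).filter fun j : ℕ => ¬(t ≤ j ∧ j + t + 1 ≤ n)).card : ℝ)
      ≤ 2*(t:ℝ) := by exact_mod_cast hcard1
  have hc2R : (((Finset.range n).filter fun j : ℕ =>
      ((n:ℝ)/3 - 2 ≤ (j:ℝ) ∧ (j:ℝ) ≤ (n:ℝ)/3 + 2)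
        ∨ ((n:ℝ)/2 - 2 ≤ j ∧ (j:ℝ) ≤ (n:ℝ)/2 + 2)
        ∨ (2*(n:ℝ)/3 - 2 ≤ j ∧ (j:ℝ) ≤ 2*(n:ℝ)/3 + 2)).card : ℝ) ≤ 18 := by
    exact_mod_cast hcard2
  rw [nsmul_eq_mul, nsmul_eq_mul, nsmul_eq_mul]
  have hfin : (n:ℝ)*(2*((C1 + 2*(t:ℝ))/(n:ℝ)^2/B)) + (2*(t:ℝ))*(2/((n:ℝ)*B))
      + 18*(4/((n:ℝ)*B)) = (2*(C1 + 2*(t:ℝ)) + 4*(t:ℝ) + 72)/B*(n:ℝ)⁻¹ := by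
    field_simp
    ring
  have m1 := mul_le_mul_of_nonneg_right hc1R e1
  have m2 := mul_le_mul_of_nonneg_right hc2R e2
  linarith [hfin, m1, m2]
end
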